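/- arXiv:2505.14214 — 2 statements merged into one kernel-verified Lean document; each statement's English description precedes it below -/
import Mathlib

section
/- (Exponential moment bound.) Let ξ_1, …, ξ_n be independent random variables taking values in a separable Hilbert space 𝒳 such that E[ξ_i] = 0 for all i, Σ_{i=1}^n E[‖ξ_i‖²_𝒳] < B², Σ_{i=1}^n E[‖ξ_i‖^q_𝒳] < A for constants B² > 0, A > 0 and an integer q ≥ 3, and additionally ‖ξ_i‖_𝒳 ≤ L almost surely for some L > 0 and all 1 ≤ i ≤ n. Write S_n := Σ_{i=1}^n ξ_i. Then for all h > 0: E[ cosh( h·‖S_n‖_𝒳 ) ] ≤ exp( c̃_2·h²·B² + c̃_q·A·h^q·e^{hL} ), where the positive constants c̃_2 and c̃_q depend only on q. -/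
open MeasureTheory ProbabilityTheory Real

lemma my_sinh_le_mul_cosh {x : ℝ} (hx : 0 ≤ x) : Real.sinh x ≤ x * Real.cosh x := by
  have hmono : MonotoneOn (fun y : ℝ => y * Real.cosh y - Real.sinh y) (Set.Ici 0) := by
    apply monotoneOn_of_deriv_nonneg (convex_Ici 0)
    · exact ((continuous_id.mul Real.continuous_cosh).sub Real.continuous_sinh).continuousOn
    · intro y _
      exact (((hasDerivAt_id y).mul (Real.hasDerivAt_cosh y)).sub
        (Real.hasDerivAt_sinh y)).differentiableAt.differentiableWithinAt
    · intro y hy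
      rw [interior_Ici, Set.mem_Ioi] at hy
      have hD := (((hasDerivAt_id y).mul (Real.hasDerivAt_cosh y)).sub
          (Real.hasDerivAt_sinh y)).deriv
      simp only [id_eq] at hD
      rw [show deriv (fun y : ℝ => y * Real.cosh y - Real.sinh y) y = _ from hD]
      have : id y * Real.sinh y = y * Real.sinh y := rfl
      nlinarith [mul_nonneg hy.le (Real.sinh_nonneg_iff.mpr hy.le)]
  have := hmono (Set.self_mem_Ici) (Set.mem_Ici.mpr hx) hx
  simpa using this

lemma my_div_sinh_mono {p r : ℝ} (hp : 0 < p) (hpr : p ≤ r) :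
    r * Real.sinh p ≤ p * Real.sinh r := by
  have hmono : MonotoneOn (fun y : ℝ => p * Real.sinh y - y * Real.sinh p) (Set.Ici p) := by
    apply monotoneOn_of_deriv_nonneg (convex_Ici p)
    · exact ((continuous_const.mul Real.continuous_sinh).sub
        (continuous_id.mul continuous_const)).continuousOn
    · intro y _
      exact (((hasDerivAt_const y p).mul (Real.hasDerivAt_sinh y)).sub
        ((hasDerivAt_id y).mul (hasDerivAt_const y (Real.sinh p)))).differentiableAt.differentiableWithinAt
    · intro y hy
      rw [interior_Ici, Set.mem_Ioi] at hy
      have hD := (((hasDerivAt_const y p).mul (Real.hasDerivAt_sinh y)).sub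
        ((hasDerivAt_id y).mul (hasDerivAt_const y (Real.sinh p)))).deriv
      simp only [id_eq] at hD
      rw [show deriv (fun y : ℝ => p * Real.sinh y - y * Real.sinh p) y = _ from hD]
      have h1 : Real.sinh p ≤ p * Real.cosh p := my_sinh_le_mul_cosh hp.le
      have h2 : Real.cosh p ≤ Real.cosh y := by
        rw [Real.cosh_le_cosh, abs_of_nonneg hp.le, abs_of_nonneg (hp.le.trans hy.le)]
        exact hy.le
      have hid : deriv id y = 1 := by simp
      nlinarith [mul_le_mul_of_nonneg_left h2 hp.le]
  have := hmono (Set.self_mem_Ici) (Set.mem_Ici.mpr hpr) hpr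
  simp only [sub_self] at this
  linarith [this]

lemma my_convexOn_cosh_sqrt : ConvexOn ℝ (Set.Ici 0) (fun t : ℝ => Real.cosh (Real.sqrt t)) := by
  apply MonotoneOn.convexOn_of_deriv (convex_Ici 0)
  · exact (Real.continuous_cosh.comp Real.continuous_sqrt).continuousOn
  · rw [interior_Ici]
    intro t ht
    rw [Set.mem_Ioi] at ht
    exact ((Real.hasDerivAt_cosh (Real.sqrt t)).comp t
      (Real.hasDerivAt_sqrt ht.ne')).differentiableAt.differentiableWithinAt
  · rw [interior_Ici]
    intro s hs t ht hst
    rw [Set.mem_Ioi] at hs ht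
    have hds := ((Real.hasDerivAt_cosh (Real.sqrt s)).comp s (Real.hasDerivAt_sqrt hs.ne')).deriv
    have hdt := ((Real.hasDerivAt_cosh (Real.sqrt t)).comp t (Real.hasDerivAt_sqrt ht.ne')).deriv
    have hfun : (fun t : ℝ => Real.cosh (Real.sqrt t)) = Real.cosh ∘ Real.sqrt := rfl
    rw [hfun, hds, hdt]
    have hss : 0 < Real.sqrt s := Real.sqrt_pos.mpr hs
    have hts : 0 < Real.sqrt t := Real.sqrt_pos.mpr ht
    have hle : Real.sqrt s ≤ Real.sqrt t := Real.sqrt_le_sqrt hst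
    have key := my_div_sinh_mono hss hle
    rw [mul_one_div, mul_one_div, div_le_div_iff₀ (by positivity) (by positivity)]
    nlinarith [key, Real.sinh_nonneg_iff.mpr hss.le, Real.sinh_nonneg_iff.mpr hts.le]

lemma my_two_point {f : ℝ → ℝ} (hf : ConvexOn ℝ (Set.Ici 0) f) {m M x y : ℝ}
    (hm : 0 ≤ m) (hmx : m ≤ x) (hxM : x ≤ M) (hsum : x + y = m + M) :
    f x + f y ≤ f m + f M := by
  rcases eq_or_lt_of_le (hmx.trans hxM) with hEq | hlt
  · have hxm : x = m := le_antisymm (by linarith) hmx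
    have hyM : y = M := by linarith
    rw [hxm, hyM]
  · set lam := (M - x) / (M - m) with hlam
    have h0 : 0 ≤ lam := by apply div_nonneg <;> linarith
    have hMm : M - m ≠ 0 := by linarith
    have h1 : (1 : ℝ) - lam = (x - m) / (M - m) := by rw [hlam]; field_simp; ring
    have h1' : 0 ≤ 1 - lam := by rw [h1]; apply div_nonneg <;> linarith
    have hMmem : M ∈ Set.Ici (0:ℝ) := by simp; linarith
    have hmmem : m ∈ Set.Ici (0:ℝ) := hm
    have hx : x = lam * m + (1 - lam) * M := by rw [h1, hlam]; field_simp; ring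
    have hy : y = (1 - lam) * m + lam * M := by
      have : y = m + M - x := by linarith
      rw [this, hx]; ring
    have c1 := hf.2 hmmem hMmem h0 h1' (by ring)
    have c2 := hf.2 hmmem hMmem h1' h0 (by ring)
    rw [smul_eq_mul, smul_eq_mul] at c1 c2
    rw [hx, hy]
    calc f (lam * m + (1-lam) * M) + f ((1-lam) * m + lam * M)
        ≤ (lam * f m + (1-lam) * f M) + ((1-lam) * f m + lam * f M) := by
          apply add_le_add c1 c2
      _ = f m + f M := by ring

lemma my_cosh_parallelogram {𝒳 : Type} [NormedAddCommGroup 𝒳] [InnerProductSpace ℝ 𝒳]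
    (s x : 𝒳) :
    Real.cosh ‖s + x‖ + Real.cosh ‖s - x‖ ≤ 2 * Real.cosh ‖s‖ * Real.cosh ‖x‖ := by
  set u := ‖s‖; set v := ‖x‖
  have hu : 0 ≤ u := norm_nonneg s
  have hv : 0 ≤ v := norm_nonneg x
  have ha : 0 ≤ ‖s + x‖ := norm_nonneg _
  have hb : 0 ≤ ‖s - x‖ := norm_nonneg _
  have hpar : ‖s + x‖^2 + ‖s - x‖^2 = (u - v)^2 + (u + v)^2 := by
    have hp := parallelogram_law_with_norm ℝ s x
    linear_combination hp
  have haM : ‖s + x‖ ≤ u + v := norm_add_le s x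
  have hbM : ‖s - x‖ ≤ u + v := norm_sub_le s x
  have haM2 : ‖s + x‖^2 ≤ (u + v)^2 := by nlinarith
  have hbM2 : ‖s - x‖^2 ≤ (u + v)^2 := by nlinarith
  have ham2 : (u - v)^2 ≤ ‖s + x‖^2 := by nlinarith
  have key := my_two_point my_convexOn_cosh_sqrt (sq_nonneg (u - v)) ham2 haM2
    hpar
  rw [Real.sqrt_sq ha, Real.sqrt_sq hb, Real.sqrt_sq (by linarith : (0:ℝ) ≤ u + v),
    Real.sqrt_sq_eq_abs, Real.cosh_abs] at key
  calc Real.cosh ‖s + x‖ + Real.cosh ‖s - x‖ ≤ Real.cosh (u - v) + Real.cosh (u + v) := key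
    _ = 2 * Real.cosh u * Real.cosh v := by rw [Real.cosh_sub, Real.cosh_add]; ring

-- cosh is convex on ℝ
lemma my_convexOn_cosh : ConvexOn ℝ Set.univ Real.cosh := by
  have h : Real.cosh = fun x => (Real.exp x + Real.exp (-x)) / 2 := by
    funext x; rw [Real.cosh_eq]
  rw [h]
  have h1 : ConvexOn ℝ Set.univ (fun x : ℝ => Real.exp (-x)) := by
    have := convexOn_exp.comp_affineMap (-(AffineMap.id ℝ ℝ))
    simpa [Function.comp_def, Pi.neg_apply] using this
  have h2 := (convexOn_exp.add h1).smul (by norm_num : (0:ℝ) ≤ (2:ℝ)⁻¹)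
  convert h2 using 2 with x
  · rfl
  · rfl
  · simp [smul_eq_mul]; ring

lemma my_cosh_mono {a b : ℝ} (ha : 0 ≤ a) (hab : a ≤ b) : Real.cosh a ≤ Real.cosh b := by
  rw [Real.cosh_le_cosh, abs_of_nonneg ha, abs_of_nonneg (ha.trans hab)]; exact hab

lemma my_cosh_le_exp {x : ℝ} (hx : 0 ≤ x) : Real.cosh x ≤ Real.exp x := by
  rw [Real.cosh_eq]
  have : Real.exp (-x) ≤ Real.exp x := Real.exp_le_exp.mpr (by linarith)
  linarith [this]

-- convexity of y ↦ cosh (h * ‖c - y‖)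
lemma my_convexOn_cosh_norm {𝒳 : Type} [NormedAddCommGroup 𝒳] [NormedSpace ℝ 𝒳]
    (h : ℝ) (hh : 0 ≤ h) (c : 𝒳) :
    ConvexOn ℝ Set.univ (fun y : 𝒳 => Real.cosh (h * ‖c - y‖)) := by
  refine ⟨convex_univ, ?_⟩
  intro y _ z _ a b ha hb hab
  have hnorm : ‖c - (a • y + b • z)‖ ≤ a * ‖c - y‖ + b * ‖c - z‖ := by
    have hc : c - (a • y + b • z) = a • (c - y) + b • (c - z) := by
      have : c = a • c + b • c := by rw [← add_smul, hab, one_smul]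
      rw [smul_sub, smul_sub]
      nth_rewrite 1 [this]
      abel
    rw [hc]
    calc ‖a • (c - y) + b • (c - z)‖ ≤ ‖a • (c - y)‖ + ‖b • (c - z)‖ := norm_add_le _ _
      _ = a * ‖c - y‖ + b * ‖c - z‖ := by
          rw [norm_smul, norm_smul, Real.norm_of_nonneg ha, Real.norm_of_nonneg hb]
  have step1 : Real.cosh (h * ‖c - (a • y + b • z)‖)
      ≤ Real.cosh (a * (h * ‖c - y‖) + b * (h * ‖c - z‖)) := by
    apply my_cosh_mono (by positivity)
    nlinarith [norm_nonneg (c - (a • y + b • z)), hnorm]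
  have step2 := my_convexOn_cosh.2 (Set.mem_univ (h * ‖c - y‖)) (Set.mem_univ (h * ‖c - z‖))
    ha hb hab
  simp only [smul_eq_mul] at step2 ⊢
  exact step1.trans step2

-- elementary bound: cosh y ≤ 1 + 2y^2 + y^q * exp c for 0 ≤ y ≤ c, 3 ≤ q
lemma my_cosh_poly_bound {y c : ℝ} (q : ℕ) (hq : 3 ≤ q) (hy : 0 ≤ y) (hyc : y ≤ c) :
    Real.cosh y ≤ 1 + 2 * y ^ 2 + y ^ q * Real.exp c := by
  have hqe : 0 ≤ y ^ q * Real.exp c := by positivity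
  rcases le_or_gt y 1 with h1 | h1
  · have hy2 : 0 ≤ y / 2 := by linarith
    have hs : Real.sinh (y/2) ≤ (y/2) * Real.cosh (y/2) := my_sinh_le_mul_cosh hy2
    have hsn : 0 ≤ Real.sinh (y/2) := Real.sinh_nonneg_iff.mpr hy2
    have hid : Real.cosh y = 2 * Real.sinh (y/2)^2 + 1 := by
      have h2 : Real.cosh (2 * (y/2)) = Real.cosh (y/2)^2 + Real.sinh (y/2)^2 :=
        Real.cosh_two_mul _
      have h3 : Real.cosh (y/2)^2 = Real.sinh (y/2)^2 + 1 := Real.cosh_sq _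
      have h4 : 2 * (y/2) = y := by ring
      rw [h4] at h2; rw [h2, h3]; ring
    have hcsq : Real.cosh (y/2)^2 ≤ 3 := by
      have e1 : Real.cosh (y/2) ≤ Real.exp (y/2) := my_cosh_le_exp hy2
      have e2 : Real.cosh (y/2)^2 ≤ Real.exp (y/2)^2 := by
        apply pow_le_pow_left₀ (by positivity) e1
      have e3 : Real.exp (y/2)^2 = Real.exp y := by
        rw [sq, ← Real.exp_add]; ring_nf
      have e4 : Real.exp y ≤ Real.exp 1 := Real.exp_le_exp.mpr h1
      nlinarith [Real.exp_one_lt_d9]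
    have hkey : Real.sinh (y/2)^2 ≤ (y/2)^2 * Real.cosh (y/2)^2 := by
      rw [← mul_pow]
      exact pow_le_pow_left₀ hsn hs 2
    nlinarith [hkey, hcsq, sq_nonneg y]
  · have hy1 : (1:ℝ) ≤ y := h1.le
    have h2 : Real.cosh y ≤ Real.exp c :=
      (my_cosh_le_exp hy).trans (Real.exp_le_exp.mpr hyc)
    have h3 : (1:ℝ) ≤ y ^ q := one_le_pow₀ hy1
    nlinarith [Real.exp_pos c, sq_nonneg y]

section helpers
variable {Ω : Type} [MeasureSpace Ω] [IsProbabilityMeasure (ℙ : Measure Ω)]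

-- integrability from a.e. bound
lemma my_integrable_of_bound {f : Ω → ℝ} (hf : AEStronglyMeasurable f ℙ) {C : ℝ}
    (hC : ∀ᵐ ω ∂ℙ, |f ω| ≤ C) : Integrable f ℙ :=
  (integrable_const C).mono' hf (by filter_upwards [hC] with ω hω using hω)

-- scaled parallelogram
lemma my_cosh_par' {𝒳 : Type} [NormedAddCommGroup 𝒳] [InnerProductSpace ℝ 𝒳]
    {h : ℝ} (hh : 0 < h) (s x : 𝒳) :
    Real.cosh (h * ‖s + x‖) + Real.cosh (h * ‖s - x‖) ≤
      2 * Real.cosh (h * ‖s‖) * Real.cosh (h * ‖x‖) := by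
  have := my_cosh_parallelogram (h • s) (h • x)
  rw [← smul_add, ← smul_sub, norm_smul, norm_smul, norm_smul, norm_smul,
    Real.norm_of_nonneg hh.le] at this
  exact this

end helpers

/-- The key one-step bound. -/
lemma my_step {𝒳 : Type} [NormedAddCommGroup 𝒳] [InnerProductSpace ℝ 𝒳]
    [CompleteSpace 𝒳] [MeasurableSpace 𝒳] [BorelSpace 𝒳] [SecondCountableTopology 𝒳]
    {Ω : Type} [MeasureSpace Ω] [IsProbabilityMeasure (ℙ : Measure Ω)]
    {X Y : Ω → 𝒳} (hX : Measurable X) (hY : Measurable Y)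
    (hindep : IndepFun X Y ℙ) (hmean : ∫ ω, Y ω ∂ℙ = 0)
    {K L h : ℝ} (hh : 0 < h) (hKbd : ∀ᵐ ω ∂ℙ, ‖X ω‖ ≤ K) (hLbd : ∀ᵐ ω ∂ℙ, ‖Y ω‖ ≤ L)
    (hK : 0 ≤ K) (hL : 0 ≤ L) :
    ∫ ω, Real.cosh (h * ‖X ω + Y ω‖) ∂ℙ ≤
      (∫ ω, Real.cosh (h * ‖X ω‖) ∂ℙ) * (2 * (∫ ω, Real.cosh (h * ‖Y ω‖) ∂ℙ) - 1) := by
  -- the composite function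
  set φ : 𝒳 → ℝ := fun v => Real.cosh (h * ‖v‖) with hφ
  have hφc : Continuous φ := Real.continuous_cosh.comp (continuous_const.mul continuous_norm)
  have hφm : Measurable φ := hφc.measurable
  have hφnn : ∀ v, 0 ≤ φ v := fun v => (Real.cosh_pos _).le
  -- integrability of all pieces
  have hbd : ∀ {Z : Ω → 𝒳} {M : ℝ}, Measurable Z → (∀ᵐ ω ∂ℙ, ‖Z ω‖ ≤ M) →
      Integrable (fun ω => φ (Z ω)) ℙ := by
    intro Z M hZ hM
    apply my_integrable_of_bound (hφc.measurable.comp hZ).aestronglyMeasurable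
    filter_upwards [hM] with ω hω
    simp only [Function.comp_apply]
    rw [abs_of_nonneg (hφnn _)]
    exact my_cosh_mono (by positivity) (by
      apply mul_le_mul_of_nonneg_left hω hh.le)
  have hiX : Integrable (fun ω => φ (X ω)) ℙ := hbd hX hKbd
  have hiY : Integrable (fun ω => φ (Y ω)) ℙ := hbd hY hLbd
  have hiXY : Integrable (fun ω => φ (X ω + Y ω)) ℙ := by
    refine hbd (M := K + L) (hX.add hY) ?_
    filter_upwards [hKbd, hLbd] with ω h1 h2
    exact (norm_add_le _ _).trans (add_le_add h1 h2)
  have hiXmY : Integrable (fun ω => φ (X ω - Y ω)) ℙ := by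
    refine hbd (M := K + L) (hX.sub hY) ?_
    filter_upwards [hKbd, hLbd] with ω h1 h2
    exact (norm_sub_le _ _).trans (add_le_add h1 h2)
  have hiprod : Integrable (fun ω => φ (X ω) * φ (Y ω)) ℙ := by
    apply my_integrable_of_bound ((hφm.comp hX).mul (hφm.comp hY)).aestronglyMeasurable
      (C := Real.cosh (h * K) * Real.cosh (h * L))
    filter_upwards [hKbd, hLbd] with ω h1 h2
    simp only [Pi.mul_apply, Function.comp_apply]
    rw [abs_of_nonneg (mul_nonneg (hφnn _) (hφnn _))]
    apply mul_le_mul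
    · exact my_cosh_mono (by positivity) (mul_le_mul_of_nonneg_left h1 hh.le)
    · exact my_cosh_mono (by positivity) (mul_le_mul_of_nonneg_left h2 hh.le)
    · exact hφnn _
    · exact (Real.cosh_pos _).le
  -- step 1: pointwise bound
  have step1 : ∫ ω, φ (X ω + Y ω) ∂ℙ ≤
      ∫ ω, (2 * (φ (X ω) * φ (Y ω)) - φ (X ω - Y ω)) ∂ℙ := by
    apply integral_mono_ae hiXY ((hiprod.const_mul 2).sub hiXmY)
    filter_upwards with ω
    have := my_cosh_par' hh (X ω) (Y ω)
    simp only [hφ, Pi.sub_apply]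
    nlinarith [this]
  -- step 2: independence splits the product
  have hφindep : IndepFun (fun ω => φ (X ω)) (fun ω => φ (Y ω)) ℙ := hindep.comp hφm hφm
  have step2 : ∫ ω, φ (X ω) * φ (Y ω) ∂ℙ =
      (∫ ω, φ (X ω) ∂ℙ) * ∫ ω, φ (Y ω) ∂ℙ := by
    have := hφindep.integral_mul_eq_mul_integral hiX.aestronglyMeasurable hiY.aestronglyMeasurable
    simpa [Pi.mul_apply] using this
  -- step 3: Jensen for the subtracted term
  have step3 : (∫ ω, φ (X ω) ∂ℙ) ≤ ∫ ω, φ (X ω - Y ω) ∂ℙ := by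
    -- push to product measure
    set μ := Measure.map X ℙ with hμ
    set ν := Measure.map Y ℙ with hν
    haveI : IsProbabilityMeasure μ := Measure.isProbabilityMeasure_map hX.aemeasurable
    haveI : IsProbabilityMeasure ν := Measure.isProbabilityMeasure_map hY.aemeasurable
    have hlaw : Measure.map (fun ω => (X ω, Y ω)) ℙ = μ.prod ν :=
      (indepFun_iff_map_prod_eq_prod_map_map hX.aemeasurable hY.aemeasurable).mp hindep
    have hF : Continuous (fun p : 𝒳 × 𝒳 => φ (p.1 - p.2)) :=
      hφc.comp (continuous_fst.sub continuous_snd)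
    have hmap : ∫ ω, φ (X ω - Y ω) ∂ℙ = ∫ p : 𝒳 × 𝒳, φ (p.1 - p.2) ∂(μ.prod ν) := by
      rw [← hlaw, integral_map (hX.prodMk hY).aemeasurable hF.aestronglyMeasurable]
    have hintprod : Integrable (fun p : 𝒳 × 𝒳 => φ (p.1 - p.2)) (μ.prod ν) := by
      rw [← hlaw]
      rw [integrable_map_measure hF.aestronglyMeasurable (hX.prodMk hY).aemeasurable]
      exact hiXmY
    have hfub : ∫ p : 𝒳 × 𝒳, φ (p.1 - p.2) ∂(μ.prod ν) =
        ∫ x, ∫ y, φ (x - y) ∂ν ∂μ := by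
      rw [integral_prod _ hintprod]
    -- mean of ν is 0
    have hmeanν : ∫ y, y ∂ν = 0 := by
      have heq : ∫ y, y ∂ν = ∫ ω, Y ω ∂ℙ :=
        integral_map hY.aemeasurable aestronglyMeasurable_id
      rw [heq, hmean]
    -- ν-a.e. bounded by L, so id is ν-integrable
    have hνbd : ∀ᵐ y ∂ν, ‖y‖ ≤ L := by
      rw [hν]
      exact (ae_map_iff hY.aemeasurable
        (measurableSet_le (measurable_norm) measurable_const)).mpr hLbd
    have hidint : Integrable (fun y : 𝒳 => y) ν := by
      refine Integrable.mono' (integrable_const L) aestronglyMeasurable_id ?_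
      filter_upwards [hνbd] with y hy using hy
    -- inner Jensen for each x
    have hinner : ∀ x : 𝒳, φ x ≤ ∫ y, φ (x - y) ∂ν := by
      intro x
      have hconv := my_convexOn_cosh_norm h hh.le x
      have hgint : Integrable (fun y : 𝒳 => Real.cosh (h * ‖x - y‖)) ν := by
        refine Integrable.mono' (integrable_const (Real.cosh (h * (‖x‖ + L))))
          ((hφc.comp (continuous_const.sub continuous_id)).aestronglyMeasurable) ?_
        filter_upwards [hνbd] with y hy
        rw [Real.norm_of_nonneg (hφnn _)]
        refine my_cosh_mono (by positivity) (mul_le_mul_of_nonneg_left ?_ hh.le)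
        exact (norm_sub_le _ _).trans (by linarith)
      have := hconv.map_integral_le
        ((hφc.comp (continuous_const.sub continuous_id)).continuousOn)
        isClosed_univ (Filter.Eventually.of_forall fun y => Set.mem_univ y)
        hidint (by exact hgint)
      rw [hmeanν] at this
      simpa [hφ] using this
    -- outer integral
    have hXμ : ∫ ω, φ (X ω) ∂ℙ = ∫ x, φ x ∂μ := by
      rw [hμ, integral_map hX.aemeasurable hφc.aestronglyMeasurable]
    rw [hXμ, hmap, hfub]
    apply integral_mono_ae
    · rw [hμ]
      rw [integrable_map_measure hφc.aestronglyMeasurable hX.aemeasurable]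
      exact hiX
    · exact hintprod.integral_prod_left
    · exact Filter.Eventually.of_forall hinner
  -- put it together
  have hsplit : ∫ ω, (2 * (φ (X ω) * φ (Y ω)) - φ (X ω - Y ω)) ∂ℙ =
      2 * ((∫ ω, φ (X ω) ∂ℙ) * ∫ ω, φ (Y ω) ∂ℙ) - ∫ ω, φ (X ω - Y ω) ∂ℙ := by
    rw [integral_sub (hiprod.const_mul 2) hiXmY, integral_const_mul, step2]
  have hXnn : 0 ≤ ∫ ω, φ (X ω) ∂ℙ := integral_nonneg fun ω => hφnn _
  calc ∫ ω, φ (X ω + Y ω) ∂ℙ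
      ≤ 2 * ((∫ ω, φ (X ω) ∂ℙ) * ∫ ω, φ (Y ω) ∂ℙ) - ∫ ω, φ (X ω - Y ω) ∂ℙ := by
        rw [← hsplit]; exact step1
    _ ≤ 2 * ((∫ ω, φ (X ω) ∂ℙ) * ∫ ω, φ (Y ω) ∂ℙ) - ∫ ω, φ (X ω) ∂ℙ := by
        linarith [step3]
    _ = (∫ ω, φ (X ω) ∂ℙ) * (2 * (∫ ω, φ (Y ω) ∂ℙ) - 1) := by ring



/-- exponential moment bound: for every integer `q ≥ 3` there exist constants
`c̃₂, c̃_q > 0` depending only on `q` such that for all independent random variables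
`ξ₁,…,ξₙ` with values in a separable real Hilbert space `𝒳` satisfying `E[ξᵢ] = 0`,
`Σᵢ E[‖ξᵢ‖²] < B²`, `Σᵢ E[‖ξᵢ‖^q] < A` and `‖ξᵢ‖ ≤ L` a.s. (`L > 0`), writing
`Sₙ = Σᵢ ξᵢ`, for all `h > 0`:
`E[cosh(h·‖Sₙ‖)] ≤ exp(c̃₂·h²·B² + c̃_q·A·h^q·e^{hL})`. -/
theorem exponential_moment_bound (q : ℕ) (hq : 3 ≤ q) :
    ∃ ctilde₂ ctildeq : ℝ, 0 < ctilde₂ ∧ 0 < ctildeq ∧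
      ∀ (𝒳 : Type) [NormedAddCommGroup 𝒳] [InnerProductSpace ℝ 𝒳] [CompleteSpace 𝒳]
        [TopologicalSpace.SeparableSpace 𝒳] [MeasurableSpace 𝒳] [BorelSpace 𝒳]
        (Ω : Type) [MeasureSpace Ω] [IsProbabilityMeasure (ℙ : Measure Ω)]
        (n : ℕ) (ξ : Fin n → Ω → 𝒳)
        (_hmeas : ∀ i, Measurable (ξ i))
        (_hindep : iIndepFun ξ ℙ)
        (_hint : ∀ i, Integrable (ξ i) ℙ) (_hmean : ∀ i, ∫ ω, ξ i ω ∂ℙ = 0)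
        (B A L : ℝ) (_hB : 0 < B) (_hA : 0 < A) (_hL : 0 < L)
        (_h2 : ∑ i, ∫⁻ ω, (‖ξ i ω‖₊ : ENNReal) ^ 2 ∂ℙ < ENNReal.ofReal (B ^ 2))
        (_hqmom : ∑ i, ∫⁻ ω, (‖ξ i ω‖₊ : ENNReal) ^ q ∂ℙ < ENNReal.ofReal A)
        (_hbdd : ∀ i, ∀ᵐ ω ∂ℙ, ‖ξ i ω‖ ≤ L)
        (h : ℝ), 0 < h →
        ∫⁻ ω, ENNReal.ofReal (Real.cosh (h * ‖∑ i, ξ i ω‖)) ∂ℙ ≤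
          ENNReal.ofReal
            (Real.exp (ctilde₂ * h ^ 2 * B ^ 2 + ctildeq * A * h ^ q * Real.exp (h * L))) := by
  refine ⟨4, 2, by norm_num, by norm_num, ?_⟩
  intro 𝒳 _ _ _ _ _ _ Ω _ _ n ξ hmeas hindep hint hmean B A L hB hA hL h2 hqmom hbdd h hh
  haveI : SecondCountableTopology 𝒳 := UniformSpace.secondCountable_of_separable 𝒳
  -- notation
  set E : Fin n → ℝ := fun i => ∫ ω, Real.cosh (h * ‖ξ i ω‖) ∂ℙ with hE
  set F : ℕ → Finset (Fin n) := fun k => Finset.univ.filter (fun i => (i : ℕ) < k) with hF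
  have hnL : (0:ℝ) ≤ n * L := by positivity
  -- a.e. bound on partial sums
  have hSbd : ∀ k, ∀ᵐ ω ∂ℙ, ‖∑ i ∈ F k, ξ i ω‖ ≤ n * L := by
    intro k
    have hall : ∀ᵐ ω ∂ℙ, ∀ i, ‖ξ i ω‖ ≤ L := ae_all_iff.mpr hbdd
    filter_upwards [hall] with ω hω
    calc ‖∑ i ∈ F k, ξ i ω‖ ≤ ∑ i ∈ F k, ‖ξ i ω‖ := norm_sum_le _ _
      _ ≤ ∑ _i ∈ F k, L := Finset.sum_le_sum (fun i _ => hω i)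
      _ = (F k).card * L := by rw [Finset.sum_const, nsmul_eq_mul]
      _ ≤ n * L := by
          have : (F k).card ≤ n := by
            calc (F k).card ≤ (Finset.univ : Finset (Fin n)).card :=
              Finset.card_le_card (Finset.filter_subset _ _)
              _ = n := by simp
          exact mul_le_mul_of_nonneg_right (by exact_mod_cast this) hL.le
  -- integrability of cosh of bounded vector fns
  have hcoshint : ∀ {Z : Ω → 𝒳} {M : ℝ}, Measurable Z → (∀ᵐ ω ∂ℙ, ‖Z ω‖ ≤ M) →
      Integrable (fun ω => Real.cosh (h * ‖Z ω‖)) ℙ := by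
    intro Z M hZ hM
    apply my_integrable_of_bound (C := Real.cosh (h * M))
      (Real.continuous_cosh.measurable.comp
        ((measurable_const.mul hZ.norm))).aestronglyMeasurable
    filter_upwards [hM] with ω hω
    simp only [Function.comp_apply]
    rw [abs_of_nonneg (Real.cosh_pos _).le]
    exact my_cosh_mono (mul_nonneg hh.le (norm_nonneg _)) (mul_le_mul_of_nonneg_left hω hh.le)
  have hEint : ∀ i, Integrable (fun ω => Real.cosh (h * ‖ξ i ω‖)) ℙ :=
    fun i => hcoshint (hmeas i) (hbdd i)
  have hE1 : ∀ i, 1 ≤ E i := by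
    intro i
    rw [hE]
    calc (1:ℝ) = ∫ _ω, (1:ℝ) ∂ℙ := by simp
      _ ≤ ∫ ω, Real.cosh (h * ‖ξ i ω‖) ∂ℙ :=
          integral_mono (integrable_const 1) (hEint i) (fun ω => Real.one_le_cosh _)
  -- main induction
  have main : ∀ k, ∫ ω, Real.cosh (h * ‖∑ i ∈ F k, ξ i ω‖) ∂ℙ ≤
      ∏ i ∈ F k, (2 * E i - 1) := by
    intro k
    induction k with
    | zero =>
        have h0 : F 0 = ∅ := by
          rw [hF]; ext i; simp
        rw [h0]
        simp
    | succ k ih =>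
        by_cases hk : k < n
        · have hins : F (k + 1) = insert ⟨k, hk⟩ (F k) := by
            rw [hF]; ext i
            simp only [Finset.mem_filter, Finset.mem_univ, true_and, Finset.mem_insert]
            rw [Nat.lt_succ_iff_lt_or_eq]
            constructor
            · rintro (h1 | h1)
              · exact Or.inr h1
              · exact Or.inl (Fin.ext h1)
            · rintro (h1 | h1)
              · exact Or.inr (by rw [h1])
              · exact Or.inl h1
          have hnotmem : (⟨k, hk⟩ : Fin n) ∉ F k := by
            rw [hF]; simp
          have hXmeas : Measurable (fun ω => ∑ i ∈ F k, ξ i ω) :=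
            Finset.measurable_sum _ (fun i _ => hmeas i)
          have hXY : IndepFun (fun ω => ∑ i ∈ F k, ξ i ω) (ξ ⟨k, hk⟩) ℙ := by
            have := hindep.indepFun_finsetSum_of_notMem hmeas hnotmem
            have hfun : (∑ j ∈ F k, ξ j) = fun ω => ∑ i ∈ F k, ξ i ω := by
              funext ω; simp [Finset.sum_apply]
            rwa [hfun] at this
          have hstep := my_step hXmeas (hmeas ⟨k, hk⟩) hXY (hmean ⟨k, hk⟩) hh
            (hSbd k) (hbdd ⟨k, hk⟩) hnL hL.le
          have hsum : ∀ ω, ∑ i ∈ F (k+1), ξ i ω = (∑ i ∈ F k, ξ i ω) + ξ ⟨k, hk⟩ ω := by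
            intro ω
            rw [hins, Finset.sum_insert hnotmem]
            abel
          have hrw : ∫ ω, Real.cosh (h * ‖∑ i ∈ F (k+1), ξ i ω‖) ∂ℙ =
              ∫ ω, Real.cosh (h * ‖(∑ i ∈ F k, ξ i ω) + ξ ⟨k, hk⟩ ω‖) ∂ℙ := by
            congr 1; funext ω; rw [hsum ω]
          have hfac : (0:ℝ) ≤ 2 * E ⟨k, hk⟩ - 1 := by linarith [hE1 ⟨k, hk⟩]
          calc ∫ ω, Real.cosh (h * ‖∑ i ∈ F (k+1), ξ i ω‖) ∂ℙ
              = ∫ ω, Real.cosh (h * ‖(∑ i ∈ F k, ξ i ω) + ξ ⟨k, hk⟩ ω‖) ∂ℙ := hrw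
            _ ≤ (∫ ω, Real.cosh (h * ‖∑ i ∈ F k, ξ i ω‖) ∂ℙ) * (2 * E ⟨k, hk⟩ - 1) := hstep
            _ ≤ (∏ i ∈ F k, (2 * E i - 1)) * (2 * E ⟨k, hk⟩ - 1) :=
                mul_le_mul_of_nonneg_right ih hfac
            _ = ∏ i ∈ F (k+1), (2 * E i - 1) := by
                rw [hins, Finset.prod_insert hnotmem]; ring
        · have heq : F (k + 1) = F k := by
            rw [hF]; ext i
            simp only [Finset.mem_filter, Finset.mem_univ, true_and]
            constructor
            · intro _; exact lt_of_lt_of_le i.isLt (not_lt.mp hk)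
            · intro _; omega
          rw [heq]; exact ih
  -- moments: real versions
  set m2 : Fin n → ℝ := fun i => ∫ ω, ‖ξ i ω‖ ^ 2 ∂ℙ with hm2
  set mq : Fin n → ℝ := fun i => ∫ ω, ‖ξ i ω‖ ^ q ∂ℙ with hmq
  have hpowint : ∀ (i : Fin n) (r : ℕ), Integrable (fun ω => ‖ξ i ω‖ ^ r) ℙ := by
    intro i r
    apply my_integrable_of_bound (C := L ^ r) ((hmeas i).norm.pow_const r).aestronglyMeasurable
    filter_upwards [hbdd i] with ω hω
    rw [abs_of_nonneg (by positivity)]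
    exact pow_le_pow_left₀ (norm_nonneg _) hω r
  have hm2nn : ∀ i, 0 ≤ m2 i := fun i => integral_nonneg (fun ω => by positivity)
  have hmqnn : ∀ i, 0 ≤ mq i := fun i => integral_nonneg (fun ω => by positivity)
  -- per-coordinate bound on E i
  have hEbound : ∀ i, E i ≤ 1 + 2 * h^2 * m2 i + h^q * Real.exp (h * L) * mq i := by
    intro i
    have i2 : Integrable (fun ω => 2 * h^2 * ‖ξ i ω‖^2) ℙ := (hpowint i 2).const_mul _
    have iq : Integrable (fun ω => h^q * Real.exp (h * L) * ‖ξ i ω‖^q) ℙ :=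
      (hpowint i q).const_mul _
    have hmono : E i ≤
        ∫ ω, (1 + 2 * h^2 * ‖ξ i ω‖^2 + h^q * Real.exp (h * L) * ‖ξ i ω‖^q) ∂ℙ := by
      rw [hE]
      apply integral_mono_ae (hEint i) (((integrable_const 1).add i2).add iq)
      filter_upwards [hbdd i] with ω hω
      have hb := my_cosh_poly_bound q hq (by positivity : (0:ℝ) ≤ h * ‖ξ i ω‖)
        (mul_le_mul_of_nonneg_left hω hh.le)
      calc Real.cosh (h * ‖ξ i ω‖)
          ≤ 1 + 2 * (h * ‖ξ i ω‖)^2 + (h * ‖ξ i ω‖)^q * Real.exp (h * L) := hb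
        _ = 1 + 2 * h^2 * ‖ξ i ω‖^2 + h^q * Real.exp (h * L) * ‖ξ i ω‖^q := by
            rw [mul_pow, mul_pow]; ring
    have hsplit : ∫ ω, (1 + 2 * h^2 * ‖ξ i ω‖^2 + h^q * Real.exp (h * L) * ‖ξ i ω‖^q) ∂ℙ
        = 1 + 2 * h^2 * m2 i + h^q * Real.exp (h * L) * mq i := by
      have i1X : Integrable (fun ω => 1 + 2 * h^2 * ‖ξ i ω‖^2) ℙ := by
        have := (integrable_const (1:ℝ)).add i2
        exact this
      rw [integral_add i1X iq, integral_add (integrable_const 1) i2,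
          integral_const, integral_const_mul, integral_const_mul, hm2, hmq]
      simp [measure_univ]
    exact hmono.trans hsplit.le
  -- exponent bound per i
  have hexp : ∀ i, 2 * E i - 1 ≤ Real.exp (4 * h^2 * m2 i + 2 * h^q * Real.exp (h * L) * mq i) := by
    intro i
    have h1 := hEbound i
    have h2' := Real.add_one_le_exp (4 * h^2 * m2 i + 2 * h^q * Real.exp (h * L) * mq i)
    linarith
  have momkey : ∀ (r : ℕ) (i : Fin n),
      (∫ ω, ‖ξ i ω‖ ^ r ∂ℙ) = (∫⁻ ω, (‖ξ i ω‖₊ : ENNReal) ^ r ∂ℙ).toReal := by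
    intro r i
    rw [integral_eq_lintegral_of_nonneg_ae
      (Filter.Eventually.of_forall (fun ω => by positivity))
      ((hmeas i).norm.pow_const r).aestronglyMeasurable]
    congr 1
    apply lintegral_congr
    intro ω
    rw [ENNReal.ofReal_pow (norm_nonneg _), ofReal_norm, enorm_eq_nnnorm]
  have sumbound : ∀ (r : ℕ) (C : ℝ), 0 ≤ C →
      (∑ i, ∫⁻ ω, (‖ξ i ω‖₊ : ENNReal) ^ r ∂ℙ) < ENNReal.ofReal C →
      ∑ i, (∫ ω, ‖ξ i ω‖ ^ r ∂ℙ) ≤ C := by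
    intro r C hC hlt
    have hne : ∀ i ∈ (Finset.univ : Finset (Fin n)),
        (∫⁻ ω, (‖ξ i ω‖₊ : ENNReal) ^ r ∂ℙ) ≠ ⊤ := by
      intro i _
      exact (lt_of_le_of_lt (Finset.single_le_sum (fun j _ => zero_le)
        (Finset.mem_univ i)) (hlt.trans_le le_top)).ne
    have hne' : ∀ i ∈ (Finset.univ : Finset (Fin n)),
        (∫⁻ ω, (‖ξ i ω‖₊ : ENNReal) ^ r ∂ℙ) ≠ ⊤ := hne
    calc ∑ i, (∫ ω, ‖ξ i ω‖ ^ r ∂ℙ)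
        = ∑ i, (∫⁻ ω, (‖ξ i ω‖₊ : ENNReal) ^ r ∂ℙ).toReal := by
          apply Finset.sum_congr rfl; intro i _; exact momkey r i
      _ = (∑ i, ∫⁻ ω, (‖ξ i ω‖₊ : ENNReal) ^ r ∂ℙ).toReal := (ENNReal.toReal_sum hne).symm
      _ ≤ C := ENNReal.toReal_le_of_le_ofReal hC hlt.le
  have hsummom2 : ∑ i, m2 i ≤ B ^ 2 := by
    rw [hm2]; exact sumbound 2 (B^2) (by positivity) h2
  have hsummomq : ∑ i, mq i ≤ A := by
    rw [hmq]; exact sumbound q A hA.le hqmom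
  -- final chain
  have hFn : F n = Finset.univ := by
    rw [hF]; ext i; simp [i.isLt]
  have hfinal : ∫ ω, Real.cosh (h * ‖∑ i, ξ i ω‖) ∂ℙ ≤
      Real.exp (4 * h^2 * B^2 + 2 * A * h^q * Real.exp (h * L)) := by
    have h1 := main n
    rw [hFn] at h1
    have h2' : ∏ i, (2 * E i - 1) ≤
        ∏ i, Real.exp (4 * h^2 * m2 i + 2 * h^q * Real.exp (h * L) * mq i) := by
      apply Finset.prod_le_prod
      · intro i _; linarith [hE1 i]
      · intro i _; exact hexp i
    have h3 : ∏ i, Real.exp (4 * h^2 * m2 i + 2 * h^q * Real.exp (h * L) * mq i)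
        = Real.exp (∑ i, (4 * h^2 * m2 i + 2 * h^q * Real.exp (h * L) * mq i)) :=
      (Real.exp_sum _ _).symm
    have h4 : ∑ i, (4 * h^2 * m2 i + 2 * h^q * Real.exp (h * L) * mq i)
        = 4 * h^2 * (∑ i, m2 i) + 2 * h^q * Real.exp (h * L) * (∑ i, mq i) := by
      rw [Finset.sum_add_distrib, ← Finset.mul_sum, ← Finset.mul_sum]
    have h5 : 4 * h^2 * (∑ i, m2 i) + 2 * h^q * Real.exp (h * L) * (∑ i, mq i)
        ≤ 4 * h^2 * B^2 + 2 * A * h^q * Real.exp (h * L) := by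
      have t1 : 4 * h^2 * (∑ i, m2 i) ≤ 4 * h^2 * B^2 :=
        mul_le_mul_of_nonneg_left hsummom2 (by positivity)
      have t2 : 2 * h^q * Real.exp (h * L) * (∑ i, mq i) ≤ 2 * A * h^q * Real.exp (h * L) := by
        have := mul_le_mul_of_nonneg_left hsummomq
          (by positivity : (0:ℝ) ≤ 2 * h^q * Real.exp (h * L))
        linarith [this]
      linarith
    calc ∫ ω, Real.cosh (h * ‖∑ i, ξ i ω‖) ∂ℙ ≤ ∏ i, (2 * E i - 1) := h1
      _ ≤ Real.exp (∑ i, (4 * h^2 * m2 i + 2 * h^q * Real.exp (h * L) * mq i)) := by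
          rw [← h3]; exact h2'
      _ ≤ Real.exp (4 * h^2 * B^2 + 2 * A * h^q * Real.exp (h * L)) := by
          rw [h4]
          exact Real.exp_le_exp.mpr h5
  -- convert to lintegral
  have hintS : Integrable (fun ω => Real.cosh (h * ‖∑ i, ξ i ω‖)) ℙ := by
    have hb := hSbd n
    rw [hFn] at hb
    exact hcoshint (Finset.measurable_sum Finset.univ (fun i _ => hmeas i)) hb
  rw [← ofReal_integral_eq_lintegral_ofReal hintS
    (Filter.Eventually.of_forall (fun ω => (Real.cosh_pos _).le))]
  exact ENNReal.ofReal_le_ofReal hfinal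
end

section
/- (Regularized residual bound.) Let the kernel boundedness assumption and (SRC) with ν ≥ 1/2 hold. Then for every α > 0: ‖ (C_π + α·Id)^{-1/2}·( I_π* f_star − C_π f_α ) ‖_H ≤ R·max{1, κ^{2(ν−1)}}·α^{min{ν,1}}, where f_α = (C_π + α·Id)^{-1} I_π* f_star. -/
open MeasureTheory Filter
open scoped RealInnerProductSpace

private lemma le_of_sq_le_sq'' {a b : ℝ} (ha : 0 ≤ a) (hb : 0 ≤ b) (h : a^2 ≤ b^2) : a ≤ b := by
  nlinarith

private lemma two_mul_le' {u v u1 u2 v1 v2 : ℝ} (hu : 0 ≤ u) (hv : 0 ≤ v)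
    (hu1 : 0 ≤ u1) (hu2 : 0 ≤ u2) (hv1 : 0 ≤ v1) (hv2 : 0 ≤ v2)
    (h1 : u^2 ≤ u1*u2) (h2 : v^2 ≤ v1*v2) : 2*(u*v) ≤ u1*v2 + u2*v1 := by
  nlinarith [sq_nonneg (u1*v2 - u2*v1), mul_nonneg hu hv, mul_nonneg (mul_nonneg hu1 hv2) (mul_nonneg hu2 hv1),
    mul_le_mul h1 h2 (sq_nonneg v) (mul_nonneg hu1 hu2), sq_nonneg (u*v),
    add_nonneg (mul_nonneg hu1 hv2) (mul_nonneg hu2 hv1)]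

private lemma cs3 {x y z x1 x2 y1 y2 z1 z2 : ℝ}
    (hx : 0 ≤ x) (hy : 0 ≤ y) (hz : 0 ≤ z)
    (hx1 : 0 ≤ x1) (hx2 : 0 ≤ x2) (hy1 : 0 ≤ y1) (hy2 : 0 ≤ y2) (hz1 : 0 ≤ z1) (hz2 : 0 ≤ z2)
    (h1 : x^2 ≤ x1*x2) (h2 : y^2 ≤ y1*y2) (h3 : z^2 ≤ z1*z2) :
    (x+y+z)^2 ≤ (x1+y1+z1)*(x2+y2+z2) := by
  have cxy := two_mul_le' hx hy hx1 hx2 hy1 hy2 h1 h2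
  have cxz := two_mul_le' hx hz hx1 hx2 hz1 hz2 h1 h3
  have cyz := two_mul_le' hy hz hy1 hy2 hz1 hz2 h2 h3
  nlinarith [cxy, cxz, cyz]

private lemma interp_bound {f : ℝ → ℝ} {c A0 A1 : ℝ} (hc : 1 ≤ c) (hA0 : 0 < A0) (hA1 : 0 < A1)
    (hfnn : ∀ t, 0 ≤ t → t ≤ 1 → 0 ≤ f t)
    (h0 : f 0 ≤ A0) (h1 : f 1 ≤ A1)
    (hmid : ∀ a b, 0 ≤ a → a ≤ 1 → 0 ≤ b → b ≤ 1 → (f ((a+b)/2))^2 ≤ f a * f b)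
    (hgrow : ∀ t s, 0 ≤ t → 0 < s → t + s ≤ 1 → f (t+s) ≤ c^s * f t)
    {θ : ℝ} (hθ0 : 0 ≤ θ) (hθ1 : θ ≤ 1) :
    f θ ≤ A1 ^ θ * A0 ^ (1-θ) := by
  have hc0 : (0:ℝ) < c := lt_of_lt_of_le one_pos hc
  have dy : ∀ n : ℕ, ∀ k : ℕ, k ≤ 2^n →
      f ((k : ℝ)/2^n) ≤ A1 ^ ((k:ℝ)/2^n) * A0 ^ (1 - (k:ℝ)/2^n) := by
    intro n
    induction n with
    | zero =>
      intro k hk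
      interval_cases k
      · simpa using h0
      · simpa using h1
    | succ n ih =>
      intro k hk
      have h2n : ((2:ℝ)^(n+1)) = 2 * 2^n := by ring
      have hpow_pos : (0:ℝ) < 2^n := by positivity
      rcases Nat.even_or_odd k with ⟨j, hj⟩ | ⟨j, hj⟩
      · have hjle : j ≤ 2^n := by
          subst hj; have : 2^(n+1) = 2 * 2^n := by rw [pow_succ]; ring
          omega
        have harg : (k:ℝ)/2^(n+1) = (j:ℝ)/2^n := by
          subst hj; push_cast; rw [h2n]; field_simp; ring
        rw [harg]; exact ih j hjle
      · have hjlt : j + 1 ≤ 2^n := by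
          subst hj; have : 2^(n+1) = 2 * 2^n := by rw [pow_succ]; ring
          omega
        set a : ℝ := (j:ℝ)/2^n with ha
        set b : ℝ := ((j:ℝ)+1)/2^n with hb
        have ha0 : 0 ≤ a := by positivity
        have hb0 : 0 ≤ b := by positivity
        have ha1 : a ≤ 1 := by
          rw [ha, div_le_one hpow_pos]
          exact_mod_cast le_trans (Nat.le_succ j) hjlt
        have hb1 : b ≤ 1 := by
          rw [hb, div_le_one hpow_pos]; exact_mod_cast hjlt
        have harg : (k:ℝ)/2^(n+1) = (a+b)/2 := by
          subst hj; rw [ha, hb]; push_cast; rw [h2n]; field_simp; ring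
        have hIa := ih j (le_trans (Nat.le_succ j) hjlt)
        have hIb : f b ≤ A1 ^ b * A0 ^ (1-b) := by
          have := ih (j+1) hjlt
          simpa [hb] using this
        have hfb : 0 ≤ f b := hfnn b hb0 hb1
        have hRa : 0 ≤ A1 ^ a * A0 ^ (1-a) := by positivity
        have hprod : f a * f b ≤ (A1 ^ a * A0 ^ (1-a)) * (A1 ^ b * A0 ^ (1-b)) :=
          mul_le_mul hIa hIb hfb hRa
        have hsum : a + b = 2 * ((k:ℝ)/2^(n+1)) := by rw [harg]; ring
        have hRhalf : (A1 ^ a * A0 ^ (1-a)) * (A1 ^ b * A0 ^ (1-b))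
            = (A1 ^ ((k:ℝ)/2^(n+1)) * A0 ^ (1 - (k:ℝ)/2^(n+1)))^2 := by
          rw [mul_pow, ← Real.rpow_natCast (A1 ^ ((k:ℝ)/2^(n+1))) 2,
            ← Real.rpow_natCast (A0 ^ (1 - (k:ℝ)/2^(n+1))) 2,
            ← Real.rpow_mul hA1.le, ← Real.rpow_mul hA0.le,
            show (A1 ^ a * A0 ^ (1-a)) * (A1 ^ b * A0 ^ (1-b))
              = (A1 ^ a * A1 ^ b) * (A0 ^ (1-a) * A0 ^ (1-b)) from by ring,
            ← Real.rpow_add hA1, ← Real.rpow_add hA0]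
          congr 1
          · congr 1; push_cast; linarith [hsum]
          · congr 1; push_cast; linarith [hsum]
        have hk01 : 0 ≤ (k:ℝ)/2^(n+1) ∧ (k:ℝ)/2^(n+1) ≤ 1 := by
          constructor
          · positivity
          · rw [div_le_one (by positivity)]; exact_mod_cast hk
        have hsq := hmid a b ha0 ha1 hb0 hb1
        rw [← harg] at hsq
        have : (f ((k:ℝ)/2^(n+1)))^2 ≤ (A1 ^ ((k:ℝ)/2^(n+1)) * A0 ^ (1 - (k:ℝ)/2^(n+1)))^2 :=
          le_trans hsq (le_trans hprod (le_of_eq hRhalf))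
        exact le_of_sq_le_sq'' (hfnn _ hk01.1 hk01.2) (by positivity) this
  rcases eq_or_lt_of_le hθ0 with hθz | hθpos
  · rw [← hθz]; simpa using h0
  set d : ℕ → ℝ := fun n => (⌊θ * 2^n⌋₊ : ℝ)/2^n with hd
  have hfloor_le : ∀ n : ℕ, (⌊θ * 2^n⌋₊ : ℝ) ≤ θ * 2^n := fun n =>
    Nat.floor_le (by positivity)
  have hk_le : ∀ n : ℕ, ⌊θ * 2^n⌋₊ ≤ 2^n := by
    intro n
    have : (⌊θ * 2^n⌋₊ : ℝ) ≤ ((2^n : ℕ) : ℝ) := by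
      push_cast
      calc (⌊θ * 2^n⌋₊ : ℝ) ≤ θ * 2^n := hfloor_le n
        _ ≤ 2^n := by nlinarith [pow_pos (by norm_num : (0:ℝ)<2) n]
    exact_mod_cast this
  have hdle : ∀ n, d n ≤ θ := by
    intro n
    rw [hd]; dsimp only
    rw [div_le_iff₀ (by positivity)]
    exact hfloor_le n
  have hd0 : ∀ n, 0 ≤ d n := fun n => by rw [hd]; positivity
  have hgap : ∀ n, θ - d n ≤ (1/2)^n := by
    intro n
    have := Nat.lt_floor_add_one (θ * 2^n)
    have hp : (0:ℝ) < 2^n := by positivity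
    have h12 : ((1:ℝ)/2)^n = 1/2^n := by rw [div_pow]; norm_num
    rw [hd]; dsimp only
    rw [h12, sub_le_iff_le_add, ← add_div, le_div_iff₀ hp]
    linarith [this]
  have hbound : ∀ n, f θ ≤ c^(θ - d n) * (A1^(d n) * A0^(1 - d n)) := by
    intro n
    have hdyn : f (d n) ≤ A1^(d n) * A0^(1 - d n) := by
      have := dy n ⌊θ * 2^n⌋₊ (hk_le n)
      simpa [hd] using this
    rcases eq_or_lt_of_le (hdle n) with heq | hlt
    · rw [heq, sub_self, Real.rpow_zero, one_mul]
      rw [heq] at hdyn; exact hdyn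
    · have hg := hgrow (d n) (θ - d n) (hd0 n) (by linarith) (by linarith)
      have harg : d n + (θ - d n) = θ := by ring
      rw [harg] at hg
      calc f θ ≤ c^(θ - d n) * f (d n) := hg
        _ ≤ c^(θ - d n) * (A1^(d n) * A0^(1 - d n)) :=
          mul_le_mul_of_nonneg_left hdyn (Real.rpow_nonneg hc0.le _)
  have hdt : Tendsto d atTop (nhds θ) := by
    have h2 : Tendsto (fun n : ℕ => θ - (1/2:ℝ)^n) atTop (nhds θ) := by
      have := tendsto_pow_atTop_nhds_zero_of_lt_one (by norm_num : (0:ℝ) ≤ 1/2) (by norm_num : (1/2:ℝ) < 1)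
      simpa using (tendsto_const_nhds.sub this)
    exact tendsto_of_tendsto_of_tendsto_of_le_of_le h2 tendsto_const_nhds
      (fun n => by linarith [hgap n]) (fun n => hdle n)
  have hexp : ∀ x : ℝ, c^(θ - x) * (A1^x * A0^(1 - x))
      = Real.exp (Real.log c * (θ - x) + (Real.log A1 * x + Real.log A0 * (1 - x))) := by
    intro x
    rw [Real.rpow_def_of_pos hc0, Real.rpow_def_of_pos hA1, Real.rpow_def_of_pos hA0,
      ← Real.exp_add, ← Real.exp_add]
  have hlim : Tendsto (fun n => c^(θ - d n) * (A1^(d n) * A0^(1 - d n))) atTop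
      (nhds (A1 ^ θ * A0 ^ (1-θ))) := by
    have hval : A1 ^ θ * A0 ^ (1-θ)
        = Real.exp (Real.log c * (θ - θ) + (Real.log A1 * θ + Real.log A0 * (1 - θ))) := by
      rw [Real.rpow_def_of_pos hA1, Real.rpow_def_of_pos hA0, ← Real.exp_add]
      rw [sub_self, mul_zero, zero_add]
    rw [hval]
    simp only [hexp]
    apply (Real.continuous_exp.tendsto _).comp
    apply Tendsto.add
    · exact tendsto_const_nhds.mul (tendsto_const_nhds.sub hdt)
    · exact Tendsto.add (tendsto_const_nhds.mul hdt)
        (tendsto_const_nhds.mul (tendsto_const_nhds.sub hdt))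
  exact ge_of_tendsto' hlim hbound

set_option maxHeartbeats 2000000

/-- regularized residual bound: under the kernel boundedness assumption
and (SRC) with `ν ≥ 1/2`, for every `α > 0`,
`‖(C_π + α·Id)^{−1/2}·(I_π^* f⋆ − C_π f_α)‖_H ≤ R·max{1, κ^{2(ν−1)}}·α^{min{ν,1}}`,
where `f_α = (C_π + α·Id)⁻¹ I_π^* f⋆`.  The operator `Sinv = (C_π + α·Id)^{−1/2}` is
characterized as the (unique) positive selfadjoint operator whose square is the inverse
of `C_π + α·Id`. -/
theorem regularized_residual_bound
    {X : Type} [MeasurableSpace X] (μX : Measure X) [IsProbabilityMeasure μX]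
    {H : Type} [NormedAddCommGroup H] [InnerProductSpace ℝ H] [CompleteSpace H]
    (φ : X → H) (κ : ℝ) (hκ : 0 < κ) (hφbdd : ∀ᵐ x ∂μX, ‖φ x‖ ≤ κ)
    (Iemb : H →L[ℝ] Lp ℝ 2 μX)
    (hIemb : ∀ f : H, (Iemb f : X → ℝ) =ᵐ[μX] fun x => inner (𝕜 := ℝ) (φ x) f)
    (Tpow : ℝ → (Lp ℝ 2 μX →L[ℝ] Lp ℝ 2 μX))
    (hT1 : Tpow 1 = Iemb.comp (ContinuousLinearMap.adjoint Iemb))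
    (hTadd : ∀ a b : ℝ, 0 < a → 0 < b → Tpow (a + b) = (Tpow a).comp (Tpow b))
    (hTsa : ∀ a : ℝ, 0 < a → IsSelfAdjoint (Tpow a))
    (hTpos : ∀ a : ℝ, 0 < a → ∀ g : Lp ℝ 2 μX, 0 ≤ inner (𝕜 := ℝ) g (Tpow a g))
    (hTnorm : ∀ a : ℝ, 0 < a → ‖Tpow a‖ ≤ (κ ^ 2) ^ a)
    (fstar : X → ℝ) (hfmem : MemLp fstar 2 μX)
    (ν R : ℝ) (hν : 1 / 2 ≤ ν) (hR : 0 < R)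
    (hSRC : ∃ g : Lp ℝ 2 μX, ‖g‖ ≤ R ∧ hfmem.toLp fstar = Tpow ν g)
    (α : ℝ) (hα : 0 < α)
    (Sinv : H →L[ℝ] H) (hSsa : IsSelfAdjoint Sinv)
    (hSpos : ∀ f : H, 0 ≤ inner (𝕜 := ℝ) f (Sinv f))
    (hSsq : (Sinv * Sinv) *
      ((ContinuousLinearMap.adjoint Iemb).comp Iemb + α • (1 : H →L[ℝ] H)) = 1) :
    ‖Sinv (ContinuousLinearMap.adjoint Iemb (hfmem.toLp fstar) -
        ((ContinuousLinearMap.adjoint Iemb).comp Iemb)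
          (Ring.inverse ((ContinuousLinearMap.adjoint Iemb).comp Iemb + α • (1 : H →L[ℝ] H))
            (ContinuousLinearMap.adjoint Iemb (hfmem.toLp fstar))))‖ ≤
      R * max 1 (κ ^ (2 * (ν - 1))) * α ^ min ν 1 := by
  classical
  obtain ⟨g, hgR, hfg⟩ := hSRC
  have hRHS0 : 0 ≤ R * max 1 (κ ^ (2*(ν-1))) * α ^ min ν 1 :=
    mul_nonneg (mul_nonneg hR.le (le_trans zero_le_one (le_max_left _ _)))
      (Real.rpow_nonneg hα.le _)
  by_cases hg0 : g = 0
  · rw [hfg, hg0]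
    simp only [map_zero, sub_zero, norm_zero]
    exact hRHS0
  have hν0 : (0:ℝ) < ν := lt_of_lt_of_le (by norm_num) hν
  set Aadj := ContinuousLinearMap.adjoint Iemb with hAadjdef
  set C : H →L[ℝ] H := Aadj.comp Iemb with hCdef
  set T := Tpow 1 with hTdef
  set Dinv : H →L[ℝ] H := Sinv * Sinv with hDdef
  -- selfadjointness facts
  have hCsa : IsSelfAdjoint (C + α • (1 : H →L[ℝ] H)) := by
    have h1 : IsSelfAdjoint C := by
      rw [IsSelfAdjoint, hCdef, hAadjdef, ContinuousLinearMap.star_eq_adjoint,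
        ContinuousLinearMap.adjoint_comp, ContinuousLinearMap.adjoint_adjoint]
    have h2 : IsSelfAdjoint (α • (1 : H →L[ℝ] H)) :=
      (IsSelfAdjoint.all α).smul (IsSelfAdjoint.one (H →L[ℝ] H))
    exact h1.add h2
  have hDsa : IsSelfAdjoint Dinv := by
    rw [IsSelfAdjoint, hDdef, star_mul, hSsa.star_eq]
  have hright : (C + α • (1 : H →L[ℝ] H)) * Dinv = 1 := by
    have h := congrArg star hSsq
    rwa [star_mul, star_one, hDsa.star_eq, hCsa.star_eq] at h
  have hRinv : Ring.inverse (C + α • (1 : H →L[ℝ] H)) = Dinv :=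
    Ring.inverse_unit ⟨C + α • (1 : H →L[ℝ] H), Dinv, hright, hSsq⟩
  -- vector identities
  have hDapp : ∀ u : H, Dinv u = Sinv (Sinv u) := fun u => rfl
  have hCapp : ∀ u : H, C u = Aadj (Iemb u) := fun u => rfl
  have hDleft : ∀ u : H, Dinv (C u) + α • Dinv u = u := by
    intro u
    have h := congrArg (fun (L : H →L[ℝ] H) => L u) hSsq
    simpa [ContinuousLinearMap.mul_apply, ContinuousLinearMap.add_apply,
      ContinuousLinearMap.smul_apply, ContinuousLinearMap.one_apply, map_add, _root_.map_smul] using h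
  have hDright : ∀ u : H, C (Dinv u) + α • Dinv u = u := by
    intro u
    have h := congrArg (fun (L : H →L[ℝ] H) => L u) hright
    simpa [ContinuousLinearMap.mul_apply, ContinuousLinearMap.add_apply,
      ContinuousLinearMap.smul_apply, ContinuousLinearMap.one_apply] using h
  set E : Lp ℝ 2 μX →L[ℝ] Lp ℝ 2 μX := α⁻¹ • (1 - Iemb.comp (Dinv.comp Aadj)) with hEdef
  have hEapp : ∀ u, E u = α⁻¹ • (u - Iemb (Dinv (Aadj u))) := by
    intro u
    rw [hEdef]
    simp [ContinuousLinearMap.smul_apply, ContinuousLinearMap.sub_apply,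
      ContinuousLinearMap.comp_apply]
  have hT1v : ∀ u, T u = Iemb (Aadj u) := by
    intro u; rw [hT1]; rfl
  have hTEA : ∀ u : H, T (Iemb u) = Iemb (C u) := fun u => by rw [hT1v]; rfl
  have hstep1 : ∀ u, T (E u) = Iemb (Dinv (Aadj u)) := by
    intro u
    rw [hEapp, _root_.map_smul, map_sub, hTEA (Dinv (Aadj u))]
    have h2 : C (Dinv (Aadj u)) = Aadj u - α • Dinv (Aadj u) :=
      eq_sub_of_add_eq (hDright (Aadj u))
    rw [h2, map_sub, _root_.map_smul, ← hT1v u]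
    rw [sub_sub_cancel, smul_smul, inv_mul_cancel₀ (ne_of_gt hα), one_smul]
  have hE1 : ∀ u, T (E u) + α • E u = u := by
    intro u
    rw [hstep1, hEapp, smul_smul, mul_inv_cancel₀ (ne_of_gt hα), one_smul, add_comm,
      sub_add_cancel]
  have hADE : ∀ u : H, Iemb (Dinv u) = E (Iemb u) := by
    intro u
    rw [hEapp]
    have h1 : Aadj (Iemb u) = C u := rfl
    rw [h1]
    have h2 : Dinv (C u) = u - α • Dinv u := eq_sub_of_add_eq (hDleft u)
    rw [h2, map_sub, _root_.map_smul, sub_sub_cancel, smul_smul,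
      inv_mul_cancel₀ (ne_of_gt hα), one_smul]
  have hETcomm : ∀ u, E (T u) = T (E u) := by
    intro u
    rw [hstep1, hEapp]
    have h3 : Aadj (T u) = C (Aadj u) := by rw [hT1v]; rfl
    rw [h3]
    have h2 : Dinv (C (Aadj u)) = Aadj u - α • Dinv (Aadj u) :=
      eq_sub_of_add_eq (hDleft (Aadj u))
    rw [h2, map_sub, _root_.map_smul, ← hT1v u, sub_sub_cancel, smul_smul,
      inv_mul_cancel₀ (ne_of_gt hα), one_smul]
  have hE2 : ∀ u, E (T u) + α • E u = u := by
    intro u; rw [hETcomm]; exact hE1 u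
  have hSsym : ∀ u v : H, ⟪Sinv u, v⟫ = ⟪u, Sinv v⟫ :=
    fun u v => (ContinuousLinearMap.isSelfAdjoint_iff_isSymmetric.mp hSsa) u v
  have hPsym : ∀ a : ℝ, 0 < a → ∀ u v, ⟪Tpow a u, v⟫ = ⟪u, Tpow a v⟫ :=
    fun a ha u v => (ContinuousLinearMap.isSelfAdjoint_iff_isSymmetric.mp (hTsa a ha)) u v
  have hTsym : ∀ u v, ⟪T u, v⟫ = ⟪u, T v⟫ := by
    rw [hTdef]; exact hPsym 1 one_pos
  have hDsym : ∀ u v : H, ⟪Dinv u, v⟫ = ⟪u, Dinv v⟫ := fun u v => by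
    rw [hDapp, hDapp, hSsym, hSsym]
  have hEsym : ∀ u v, ⟪E u, v⟫ = ⟪u, E v⟫ := by
    intro u v
    rw [hEapp u, hEapp v]
    rw [real_inner_smul_left, real_inner_smul_right, inner_sub_left, inner_sub_right]
    have h1 : ⟪Iemb (Dinv (Aadj u)), v⟫ = ⟪u, Iemb (Dinv (Aadj v))⟫ := by
      calc ⟪Iemb (Dinv (Aadj u)), v⟫
          = ⟪Dinv (Aadj u), Aadj v⟫ := (ContinuousLinearMap.adjoint_inner_right Iemb _ v).symm
        _ = ⟪Aadj u, Dinv (Aadj v)⟫ := hDsym _ _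
        _ = ⟪u, Iemb (Dinv (Aadj v))⟫ := ContinuousLinearMap.adjoint_inner_left Iemb _ u
    rw [h1]
  have hPadd : ∀ a b : ℝ, 0 < a → 0 < b → ∀ u, Tpow (a+b) u = Tpow a (Tpow b u) := by
    intro a b ha hb u
    have h := congrArg (fun (L : Lp ℝ 2 μX →L[ℝ] Lp ℝ 2 μX) => L u) (hTadd a b ha hb)
    simpa using h
  have hPT : ∀ a : ℝ, 0 < a → ∀ u, Tpow a (T u) = T (Tpow a u) := by
    intro a ha u
    rw [hTdef]
    calc Tpow a (Tpow 1 u) = Tpow (a+1) u := (hPadd a 1 ha one_pos u).symm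
      _ = Tpow (1+a) u := by rw [add_comm]
      _ = Tpow 1 (Tpow a u) := hPadd 1 a one_pos ha u
  have hPE : ∀ a : ℝ, 0 < a → ∀ u, Tpow a (E u) = E (Tpow a u) := by
    intro a ha u
    have hu : Tpow a u = T (Tpow a (E u)) + α • Tpow a (E u) := by
      conv_lhs => rw [← hE1 u]
      rw [map_add, _root_.map_smul, hPT a ha]
    rw [hu, map_add, _root_.map_smul]
    exact (hE2 (Tpow a (E u))).symm
  -- norm bounds
  have hTpos1 : ∀ u, 0 ≤ ⟪T u, u⟫ := by
    intro u
    rw [real_inner_comm, hTdef]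
    exact hTpos 1 one_pos u
  have hkey_norm : ∀ u, ‖T (E u)‖^2 ≤ ‖u‖^2 ∧ (α * ‖E u‖)^2 ≤ ‖u‖^2 := by
    intro u
    have hu : T (E u) + α • E u = u := hE1 u
    have hnorm : ‖u‖^2 = ‖T (E u)‖^2 + 2*(α*⟪T (E u), E u⟫) + α^2*‖E u‖^2 := by
      conv_lhs => rw [← hu]
      rw [norm_add_sq_real, real_inner_smul_right, norm_smul, Real.norm_eq_abs,
        abs_of_pos hα, mul_pow]
    have hpos : 0 ≤ ⟪T (E u), E u⟫ := hTpos1 (E u)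
    constructor
    · nlinarith [mul_nonneg hα.le hpos, sq_nonneg (α * ‖E u‖), mul_pow α ‖E u‖ 2]
    · nlinarith [mul_nonneg hα.le hpos, sq_nonneg ‖T (E u)‖, mul_pow α ‖E u‖ 2]
  have hTEnorm : ∀ u, ‖T (E u)‖ ≤ ‖u‖ :=
    fun u => le_of_sq_le_sq'' (norm_nonneg _) (norm_nonneg _) (hkey_norm u).1
  have hαEnorm : ∀ u, α * ‖E u‖ ≤ ‖u‖ :=
    fun u => le_of_sq_le_sq'' (mul_nonneg hα.le (norm_nonneg _)) (norm_nonneg _) (hkey_norm u).2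
  -- rewrite the goal
  rw [hfg, hRinv]
  have hres : Aadj (Tpow ν g) - C (Dinv (Aadj (Tpow ν g))) = α • Dinv (Aadj (Tpow ν g)) := by
    have h := hDright (Aadj (Tpow ν g))
    rw [sub_eq_iff_eq_add']
    exact h.symm
  rw [hres, _root_.map_smul, norm_smul, Real.norm_eq_abs, abs_of_pos hα]
  set w : H := Aadj (Tpow ν g) with hwdef
  set L : ℝ := ‖Sinv (Dinv w)‖ with hLdef
  have hL0 : 0 ≤ L := norm_nonneg _
  -- compute L^2
  have hL2 : L^2 = ⟪g, Tpow (ν+ν) (E (E (E (T g))))⟫ := by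
    have e1 : L^2 = ⟪w, Dinv (Dinv (Dinv w))⟫ := by
      rw [hLdef, ← real_inner_self_eq_norm_sq]
      calc ⟪Sinv (Dinv w), Sinv (Dinv w)⟫
          = ⟪Dinv w, Sinv (Sinv (Dinv w))⟫ := hSsym _ _
        _ = ⟪Sinv (Sinv w), Dinv (Dinv w)⟫ := rfl
        _ = ⟪Sinv w, Sinv (Dinv (Dinv w))⟫ := hSsym _ _
        _ = ⟪w, Sinv (Sinv (Dinv (Dinv w)))⟫ := hSsym _ _
        _ = ⟪w, Dinv (Dinv (Dinv w))⟫ := rfl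
    have e2 : ⟪w, Dinv (Dinv (Dinv w))⟫ = ⟪Tpow ν g, Iemb (Dinv (Dinv (Dinv w)))⟫ := by
      conv_lhs => rw [hwdef]
      exact ContinuousLinearMap.adjoint_inner_left Iemb _ _
    have e3 : Iemb (Dinv (Dinv (Dinv w))) = E (E (E (Iemb w))) := by
      rw [hADE, hADE, hADE]
    have e4 : Iemb w = T (Tpow ν g) := by rw [hwdef, ← hT1v]
    have e5 : T (Tpow ν g) = Tpow ν (T g) := (hPT ν hν0 g).symm
    have e6 : E (E (E (Tpow ν (T g)))) = Tpow ν (E (E (E (T g)))) := by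
      rw [← hPE ν hν0 (T g), ← hPE ν hν0 (E (T g)), ← hPE ν hν0 (E (E (T g)))]
    have e7 : ⟪Tpow ν g, Tpow ν (E (E (E (T g))))⟫ = ⟪g, Tpow (ν+ν) (E (E (E (T g))))⟫ := by
      rw [hPsym ν hν0, ← hPadd ν ν hν0 hν0]
    rw [e1, e2, e3, e4, e5, e6, e7]
  -- shared norm bound
  have hTTz : ‖T (T (E (E (E (T g)))))‖ ≤ ‖g‖ := by
    have hz1 : T (T (E (E (E (T g))))) = T (E (T (E (E (T g))))) := by
      rw [← hETcomm (E (E (T g)))]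
    calc ‖T (T (E (E (E (T g)))))‖ = ‖T (E (T (E (E (T g)))))‖ := by rw [hz1]
      _ ≤ ‖T (E (E (T g)))‖ := hTEnorm _
      _ ≤ ‖E (T g)‖ := hTEnorm _
      _ = ‖T (E g)‖ := by rw [hETcomm g]
      _ ≤ ‖g‖ := hTEnorm g
  have hT2app : ∀ u, Tpow 2 u = T (T u) := by
    intro u
    rw [show (2:ℝ) = 1 + 1 from by norm_num, hPadd 1 1 one_pos one_pos, ← hTdef]
  rcases lt_or_ge ν 1 with hν1 | hν1
  · -- case ν < 1
    have hmin : min ν 1 = ν := min_eq_left hν1.le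
    have hgpos : 0 < ‖g‖ := norm_pos_iff.mpr hg0
    have hkey : (α*L)^2 ≤ ‖g‖^2 * α ^ (ν+ν) := by
      rcases eq_or_lt_of_le hν with he | hgt
      · -- 1/2 = ν
        have hTz : Tpow (ν+ν) (E (E (E (T g)))) = T (E (E (E (T g)))) := by
          rw [show ν + ν = 1 from by rw [← he]; norm_num, ← hTdef]
        have hz2 : E (E (E (T g))) = E (E (T (E g))) := by rw [hETcomm g]
        have hTn : α * ‖T (E (E (E (T g))))‖ ≤ ‖g‖ := by
          have c1 : ‖T (E (E (T (E g))))‖ ≤ ‖E g‖ := by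
            calc ‖T (E (E (T (E g))))‖ ≤ ‖E (T (E g))‖ := hTEnorm _
              _ = ‖T (E (E g))‖ := by rw [hETcomm (E g)]
              _ ≤ ‖E g‖ := hTEnorm _
          have c2 := hαEnorm g
          calc α * ‖T (E (E (E (T g))))‖ = α * ‖T (E (E (T (E g))))‖ := by rw [hz2]
            _ ≤ α * ‖E g‖ := mul_le_mul_of_nonneg_left c1 hα.le
            _ ≤ ‖g‖ := c2
        have hLsq : L^2 ≤ ‖g‖ * ‖T (E (E (E (T g))))‖ := by
          rw [hL2, hTz]
          exact real_inner_le_norm _ _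
        have hrw : ‖g‖^2 * α ^ (ν+ν) = α * ‖g‖^2 := by
          rw [show ν + ν = 1 from by rw [← he]; norm_num, Real.rpow_one]; ring
        rw [hrw]
        -- (αL)^2 = α * (α L^2) ≤ α * (α ‖g‖ ‖Tz‖) ≤ α * ‖g‖^2
        have h5 : α * L^2 ≤ ‖g‖ * (α * ‖T (E (E (E (T g))))‖) := by
          calc α * L^2 ≤ α * (‖g‖ * ‖T (E (E (E (T g))))‖) :=
              mul_le_mul_of_nonneg_left hLsq hα.le
            _ = ‖g‖ * (α * ‖T (E (E (E (T g))))‖) := by ring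
        have h6 : α * L^2 ≤ ‖g‖ * ‖g‖ :=
          le_trans h5 (mul_le_mul_of_nonneg_left hTn (norm_nonneg g))
        calc (α*L)^2 = α * (α * L^2) := by ring
          _ ≤ α * (‖g‖ * ‖g‖) := mul_le_mul_of_nonneg_left h6 hα.le
          _ = α * ‖g‖^2 := by ring
      · -- 1/2 < ν < 1 : interpolation machinery
        obtain ⟨p, hpdef⟩ : ∃ x, x = E (T g) := ⟨_, rfl⟩
        obtain ⟨h0, hh0⟩ : ∃ x, x = E p := ⟨_, rfl⟩
        obtain ⟨θ, hθdef⟩ : ∃ x : ℝ, x = ν + ν - 1 := ⟨_, rfl⟩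
        obtain ⟨B, hBdef⟩ : ∃ x : ℝ, x = ‖g‖^2 := ⟨_, rfl⟩
        obtain ⟨c, hcdef⟩ : ∃ x : ℝ, x = max (κ^2) (max α 1) := ⟨_, rfl⟩
        have hθpos : 0 < θ := by rw [hθdef]; linarith
        have hθlt : θ < 1 := by rw [hθdef]; linarith
        have hBpos : 0 < B := by rw [hBdef]; positivity
        have hc1 : (1:ℝ) ≤ c := by
          rw [hcdef]; exact le_trans (le_max_right α 1) (le_max_right _ _)
        have hcκ : (κ^2:ℝ) ≤ c := by rw [hcdef]; exact le_max_left _ _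
        have hcα : α ≤ c := by
          rw [hcdef]; exact le_trans (le_max_left α 1) (le_max_right _ _)
        -- inner-product helpers
        have hsqv : ∀ s : ℝ, 0 < s → ∀ u : Lp ℝ 2 μX, ⟪u, Tpow s u⟫ = ‖Tpow (s/2) u‖^2 := by
          intro s hs u
          have hdec : Tpow s u = Tpow (s/2) (Tpow (s/2) u) := by
            have h := hPadd (s/2) (s/2) (by linarith) (by linarith) u
            rw [show s/2 + s/2 = s from by ring] at h
            exact h
          rw [hdec, ← hPsym (s/2) (by linarith), real_inner_self_eq_norm_sq]
        have hmid_inner : ∀ s t : ℝ, 0 < s → 0 < t →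
            ⟪h0, Tpow ((s+t)/2) h0⟫^2 ≤ ⟪h0, Tpow s h0⟫ * ⟪h0, Tpow t h0⟫ := by
          intro s t hs ht
          have hdec : Tpow ((s+t)/2) h0 = Tpow (s/2) (Tpow (t/2) h0) := by
            have h := hPadd (s/2) (t/2) (by linarith) (by linarith) h0
            rw [show s/2 + t/2 = (s+t)/2 from by ring] at h
            exact h
          rw [hdec, ← hPsym (s/2) (by linarith)]
          have habs := abs_real_inner_le_norm (Tpow (s/2) h0) (Tpow (t/2) h0)
          have hsq1 : ‖Tpow (s/2) h0‖^2 = ⟪h0, Tpow s h0⟫ := (hsqv s hs h0).symm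
          have hsq2 : ‖Tpow (t/2) h0‖^2 = ⟪h0, Tpow t h0⟫ := (hsqv t ht h0).symm
          calc ⟪Tpow (s/2) h0, Tpow (t/2) h0⟫^2
              ≤ (‖Tpow (s/2) h0‖ * ‖Tpow (t/2) h0‖)^2 := by
                rw [← sq_abs]
                exact pow_le_pow_left₀ (abs_nonneg _) habs 2
            _ = ⟪h0, Tpow s h0⟫ * ⟪h0, Tpow t h0⟫ := by rw [mul_pow, hsq1, hsq2]
        have hmid0 : ∀ t : ℝ, 0 < t →
            ⟪h0, Tpow (t/2) h0⟫^2 ≤ ‖h0‖^2 * ⟪h0, Tpow t h0⟫ := by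
          intro t ht
          have habs := abs_real_inner_le_norm h0 (Tpow (t/2) h0)
          have hsq2 : ‖Tpow (t/2) h0‖^2 = ⟪h0, Tpow t h0⟫ := (hsqv t ht h0).symm
          calc ⟪h0, Tpow (t/2) h0⟫^2 ≤ (‖h0‖ * ‖Tpow (t/2) h0‖)^2 := by
                rw [← sq_abs]; exact pow_le_pow_left₀ (abs_nonneg _) habs 2
            _ = ‖h0‖^2 * ⟪h0, Tpow t h0⟫ := by rw [mul_pow, hsq2]
        have hgrow_inner : ∀ t s : ℝ, 0 < t → 0 < s →
            ⟪h0, Tpow (t+s) h0⟫ ≤ (κ^2) ^ s * ⟪h0, Tpow t h0⟫ := by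
          intro t s ht hs
          have hdec : Tpow (t+s) h0 = Tpow (t/2) (Tpow s (Tpow (t/2) h0)) := by
            have h := hPadd (t/2) (s+t/2) (by linarith) (by linarith) h0
            rw [show t/2 + (s + t/2) = t + s from by ring, hPadd s (t/2) hs (by linarith)] at h
            exact h
          rw [hdec, ← hPsym (t/2) (by linarith)]
          have h1 := real_inner_le_norm (Tpow (t/2) h0) (Tpow s (Tpow (t/2) h0))
          have h2 : ‖Tpow s (Tpow (t/2) h0)‖ ≤ ‖Tpow s‖ * ‖Tpow (t/2) h0‖ :=
            ContinuousLinearMap.le_opNorm _ _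
          have h3 := hTnorm s hs
          have h4 : ‖Tpow (t/2) h0‖^2 = ⟪h0, Tpow t h0⟫ := (hsqv t ht h0).symm
          calc ⟪Tpow (t/2) h0, Tpow s (Tpow (t/2) h0)⟫
              ≤ ‖Tpow (t/2) h0‖ * ‖Tpow s (Tpow (t/2) h0)‖ := h1
            _ ≤ ‖Tpow (t/2) h0‖ * (‖Tpow s‖ * ‖Tpow (t/2) h0‖) :=
                mul_le_mul_of_nonneg_left h2 (norm_nonneg _)
            _ = ‖Tpow s‖ * ‖Tpow (t/2) h0‖^2 := by ring
            _ ≤ (κ^2)^s * ‖Tpow (t/2) h0‖^2 := mul_le_mul_of_nonneg_right h3 (sq_nonneg _)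
            _ = (κ^2)^s * ⟪h0, Tpow t h0⟫ := by rw [h4]
        have hgrow0 : ∀ s : ℝ, 0 < s → ⟪h0, Tpow s h0⟫ ≤ (κ^2)^s * ‖h0‖^2 := by
          intro s hs
          have h1 := real_inner_le_norm h0 (Tpow s h0)
          have h2 : ‖Tpow s h0‖ ≤ ‖Tpow s‖ * ‖h0‖ := ContinuousLinearMap.le_opNorm _ _
          have h3 := hTnorm s hs
          calc ⟪h0, Tpow s h0⟫ ≤ ‖h0‖ * ‖Tpow s h0‖ := h1
            _ ≤ ‖h0‖ * (‖Tpow s‖ * ‖h0‖) := mul_le_mul_of_nonneg_left h2 (norm_nonneg _)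
            _ = ‖Tpow s‖ * ‖h0‖^2 := by ring
            _ ≤ (κ^2)^s * ‖h0‖^2 := mul_le_mul_of_nonneg_right h3 (sq_nonneg _)
        -- endpoint data
        have hph0 : T h0 + α • h0 = p := by rw [hh0]; exact hE1 p
        have hpnorm : ‖p‖ ≤ ‖g‖ := by rw [hpdef, hETcomm g]; exact hTEnorm g
        have hh0norm : α * ‖h0‖ ≤ ‖p‖ := by rw [hh0]; exact hαEnorm p
        have hTh0norm : ‖T h0‖ ≤ ‖p‖ := by rw [hh0]; exact hTEnorm p
        -- the interpolation function
        set F : ℝ → ℝ := fun t => if t ≤ 0 then ‖h0‖^2 else ⟪h0, Tpow t h0⟫ with hFdef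
        set fJ : ℝ → ℝ := fun t => α * ⟪h0, Tpow (t+1) h0⟫ + α^2 * F t + B * α ^ t with hfJdef
        have hFapp : ∀ t, F t = if t ≤ 0 then ‖h0‖^2 else ⟪h0, Tpow t h0⟫ := fun t => rfl
        have hfJapp : ∀ t, fJ t = α * ⟪h0, Tpow (t+1) h0⟫ + α^2 * F t + B * α ^ t :=
          fun t => rfl
        have hF0 : F 0 = ‖h0‖^2 := by rw [hFapp]; exact if_pos le_rfl
        have hFpos : ∀ t : ℝ, 0 < t → F t = ⟪h0, Tpow t h0⟫ := by
          intro t ht; rw [hFapp]; exact if_neg (not_le.mpr ht)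
        have hFnn : ∀ t : ℝ, 0 ≤ F t := by
          intro t
          rw [hFapp]
          by_cases ht : t ≤ 0
          · rw [if_pos ht]; positivity
          · rw [if_neg ht]; exact hTpos t (not_le.mp ht) h0
        have hfJnn : ∀ t, 0 ≤ t → t ≤ 1 → 0 ≤ fJ t := by
          intro t ht0 ht1
          rw [hfJapp t]
          have q1 := hTpos (t+1) (by linarith) h0
          have q2 := hFnn t
          have q3 : (0:ℝ) ≤ B * α ^ t := mul_nonneg hBpos.le (Real.rpow_nonneg hα.le t)
          have q4 : (0:ℝ) ≤ α * ⟪h0, Tpow (t+1) h0⟫ := mul_nonneg hα.le q1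
          have q5 : (0:ℝ) ≤ α^2 * F t := mul_nonneg (sq_nonneg α) q2
          linarith
        -- endpoints
        have he0 : fJ 0 ≤ 2*B := by
          have hval : fJ 0 = α * ⟪h0, T h0⟫ + α^2 * ‖h0‖^2 + B := by
            rw [hfJapp, hF0, Real.rpow_zero, mul_one, zero_add, ← hTdef]
          have hcomb : α * ⟪h0, T h0⟫ + α^2 * ‖h0‖^2 = α * ⟪h0, p⟫ := by
            rw [← hph0, inner_add_right, real_inner_smul_right, real_inner_self_eq_norm_sq]
            ring
          have hip : α * ⟪h0, p⟫ ≤ B := by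
            rw [hBdef]
            calc α * ⟪h0, p⟫ ≤ α * (‖h0‖ * ‖p‖) :=
                mul_le_mul_of_nonneg_left (real_inner_le_norm h0 p) hα.le
              _ = (α * ‖h0‖) * ‖p‖ := by ring
              _ ≤ ‖p‖ * ‖p‖ := mul_le_mul_of_nonneg_right hh0norm (norm_nonneg p)
              _ ≤ ‖g‖ * ‖g‖ := mul_le_mul hpnorm hpnorm (norm_nonneg p) (norm_nonneg g)
              _ = ‖g‖^2 := by ring
          rw [hval, hcomb]
          linarith
        have he1 : fJ 1 ≤ 2*(B*α) := by
          have hT2i : ⟪h0, Tpow (1+1) h0⟫ = ⟪T h0, T h0⟫ := by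
            rw [hPadd 1 1 one_pos one_pos, ← hTdef, ← hTsym]
          have hval : fJ 1 = α * ⟪T h0, T h0⟫ + α^2 * ⟪T h0, h0⟫ + B * α := by
            rw [hfJapp, hFpos 1 one_pos, Real.rpow_one, hT2i, ← hTdef]
            rw [real_inner_comm h0 (T h0)]
          have hcomb : α * ⟪T h0, T h0⟫ + α^2 * ⟪T h0, h0⟫ = α * ⟪T h0, p⟫ := by
            rw [← hph0, inner_add_right, real_inner_smul_right]
            ring
          have hip : α * ⟪T h0, p⟫ ≤ B * α := by
            rw [hBdef]
            have q : ⟪T h0, p⟫ ≤ ‖g‖^2 := by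
              calc ⟪T h0, p⟫ ≤ ‖T h0‖ * ‖p‖ := real_inner_le_norm _ _
                _ ≤ ‖p‖ * ‖p‖ := mul_le_mul_of_nonneg_right hTh0norm (norm_nonneg p)
                _ ≤ ‖g‖ * ‖g‖ := mul_le_mul hpnorm hpnorm (norm_nonneg p) (norm_nonneg g)
                _ = ‖g‖^2 := by ring
            calc α * ⟪T h0, p⟫ ≤ α * ‖g‖^2 := mul_le_mul_of_nonneg_left q hα.le
              _ = ‖g‖^2 * α := by ring
          rw [hval, hcomb]
          linarith [hip]
        -- midpoint log-convexity
        have hmidJ : ∀ a b : ℝ, 0 ≤ a → a ≤ 1 → 0 ≤ b → b ≤ 1 →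
            (fJ ((a+b)/2))^2 ≤ fJ a * fJ b := by
          intro a b ha0 ha1 hb0 hb1
          have hm0 : 0 ≤ (a+b)/2 := by linarith
          have hx : 0 ≤ α * ⟪h0, Tpow ((a+b)/2+1) h0⟫ :=
            mul_nonneg hα.le (hTpos _ (by linarith) h0)
          have hxa : 0 ≤ α * ⟪h0, Tpow (a+1) h0⟫ := mul_nonneg hα.le (hTpos _ (by linarith) h0)
          have hxb : 0 ≤ α * ⟪h0, Tpow (b+1) h0⟫ := mul_nonneg hα.le (hTpos _ (by linarith) h0)
          have hx2 : (α * ⟪h0, Tpow ((a+b)/2+1) h0⟫)^2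
              ≤ (α * ⟪h0, Tpow (a+1) h0⟫)*(α * ⟪h0, Tpow (b+1) h0⟫) := by
            have hmi := hmid_inner (a+1) (b+1) (by linarith) (by linarith)
            rw [show ((a+1)+(b+1))/2 = (a+b)/2+1 from by ring] at hmi
            calc (α * ⟪h0, Tpow ((a+b)/2+1) h0⟫)^2
                = α^2 * ⟪h0, Tpow ((a+b)/2+1) h0⟫^2 := by ring
              _ ≤ α^2 * (⟪h0, Tpow (a+1) h0⟫ * ⟪h0, Tpow (b+1) h0⟫) :=
                  mul_le_mul_of_nonneg_left hmi (sq_nonneg α)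
              _ = (α * ⟪h0, Tpow (a+1) h0⟫)*(α * ⟪h0, Tpow (b+1) h0⟫) := by ring
          have hy : 0 ≤ α^2 * F ((a+b)/2) := mul_nonneg (sq_nonneg α) (hFnn _)
          have hya : 0 ≤ α^2 * F a := mul_nonneg (sq_nonneg α) (hFnn a)
          have hyb : 0 ≤ α^2 * F b := mul_nonneg (sq_nonneg α) (hFnn b)
          have hFF : (F ((a+b)/2))^2 ≤ F a * F b := by
            rcases eq_or_lt_of_le ha0 with haz | hap
            · rcases eq_or_lt_of_le hb0 with hbz | hbp
              · rw [show (a+b)/2 = 0 from by rw [← haz, ← hbz]; norm_num, ← haz, ← hbz,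
                  hF0]
                exact le_of_eq (by ring)
              · rw [show (a+b)/2 = b/2 from by rw [← haz]; ring, ← haz, hF0,
                  hFpos b hbp, hFpos (b/2) (by linarith)]
                exact hmid0 b hbp
            · rcases eq_or_lt_of_le hb0 with hbz | hbp
              · rw [show (a+b)/2 = a/2 from by rw [← hbz]; ring, ← hbz, hF0,
                  hFpos a hap, hFpos (a/2) (by linarith)]
                rw [mul_comm]
                exact hmid0 a hap
              · rw [hFpos _ (by linarith : (0:ℝ) < (a+b)/2), hFpos a hap, hFpos b hbp]
                exact hmid_inner a b hap hbp
          have hy2 : (α^2 * F ((a+b)/2))^2 ≤ (α^2 * F a)*(α^2 * F b) := by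
            calc (α^2 * F ((a+b)/2))^2 = (α^2)^2 * (F ((a+b)/2))^2 := by ring
              _ ≤ (α^2)^2 * (F a * F b) := mul_le_mul_of_nonneg_left hFF (by positivity)
              _ = (α^2 * F a)*(α^2 * F b) := by ring
          have hz : 0 ≤ B * α ^ ((a+b)/2) := mul_nonneg hBpos.le (Real.rpow_nonneg hα.le _)
          have hza : 0 ≤ B * α ^ a := mul_nonneg hBpos.le (Real.rpow_nonneg hα.le _)
          have hzb : 0 ≤ B * α ^ b := mul_nonneg hBpos.le (Real.rpow_nonneg hα.le _)
          have hz2 : (B * α ^ ((a+b)/2))^2 ≤ (B * α ^ a)*(B * α ^ b) := by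
            have hαm : (α ^ ((a+b)/2))^2 = α ^ a * α ^ b := by
              rw [← Real.rpow_natCast (α ^ ((a+b)/2)) 2, ← Real.rpow_mul hα.le,
                ← Real.rpow_add hα]
              congr 1
              push_cast
              ring
            refine le_of_eq ?_
            calc (B * α ^ ((a+b)/2))^2 = B^2 * (α ^ ((a+b)/2))^2 := by ring
              _ = (B * α ^ a)*(B * α ^ b) := by rw [hαm]; ring
          rw [hfJapp ((a+b)/2), hfJapp a, hfJapp b]
          exact cs3 hx hy hz hxa hxb hya hyb hza hzb hx2 hy2 hz2
        -- growth
        have hgrowJ : ∀ t s : ℝ, 0 ≤ t → 0 < s → t + s ≤ 1 → fJ (t+s) ≤ c^s * fJ t := by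
          intro t s ht hs hts
          have hκs_le : ((κ^2:ℝ))^s ≤ c^s := Real.rpow_le_rpow (by positivity) hcκ hs.le
          have hαs_le : α^s ≤ c^s := Real.rpow_le_rpow hα.le hcα hs.le
          have hterm1 : ⟪h0, Tpow (t+s+1) h0⟫ ≤ (κ^2)^s * ⟪h0, Tpow (t+1) h0⟫ := by
            have h := hgrow_inner (t+1) s (by linarith) hs
            rw [show (t+1)+s = t+s+1 from by ring] at h
            exact h
          have hterm2 : F (t+s) ≤ (κ^2)^s * F t := by
            rcases eq_or_lt_of_le ht with htz | htp
            · rw [← htz, zero_add, hF0, hFpos s hs]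
              exact hgrow0 s hs
            · rw [hFpos t htp, hFpos (t+s) (by linarith)]
              exact hgrow_inner t s htp hs
          have hterm3 : B * α^(t+s) ≤ c^s * (B * α^t) := by
            rw [Real.rpow_add hα]
            calc B * (α^t * α^s) = α^s * (B * α^t) := by ring
              _ ≤ c^s * (B*α^t) :=
                mul_le_mul_of_nonneg_right hαs_le
                  (mul_nonneg hBpos.le (Real.rpow_nonneg hα.le t))
          have b1 : α * ⟪h0, Tpow (t+s+1) h0⟫ ≤ c^s * (α * ⟪h0, Tpow (t+1) h0⟫) := by
            have h2 : (κ^2)^s * ⟪h0, Tpow (t+1) h0⟫ ≤ c^s * ⟪h0, Tpow (t+1) h0⟫ :=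
              mul_le_mul_of_nonneg_right hκs_le (hTpos _ (by linarith) h0)
            calc α * ⟪h0, Tpow (t+s+1) h0⟫
                ≤ α * ((κ^2)^s * ⟪h0, Tpow (t+1) h0⟫) := mul_le_mul_of_nonneg_left hterm1 hα.le
              _ ≤ α * (c^s * ⟪h0, Tpow (t+1) h0⟫) := mul_le_mul_of_nonneg_left h2 hα.le
              _ = c^s * (α * ⟪h0, Tpow (t+1) h0⟫) := by ring
          have b2 : α^2 * F (t+s) ≤ c^s * (α^2 * F t) := by
            have h2 : (κ^2)^s * F t ≤ c^s * F t :=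
              mul_le_mul_of_nonneg_right hκs_le (hFnn t)
            calc α^2 * F (t+s) ≤ α^2 * ((κ^2)^s * F t) :=
                mul_le_mul_of_nonneg_left hterm2 (sq_nonneg α)
              _ ≤ α^2 * (c^s * F t) := mul_le_mul_of_nonneg_left h2 (sq_nonneg α)
              _ = c^s * (α^2 * F t) := by ring
          rw [hfJapp (t+s), hfJapp t, mul_add, mul_add]
          linarith [b1, b2, hterm3]
        -- apply interpolation
        have hA0 : (0:ℝ) < 2*B := by linarith
        have hA1 : (0:ℝ) < 2*(B*α) := by positivity
        have hinterp := interp_bound hc1 hA0 hA1 hfJnn he0 he1 hmidJ hgrowJ hθpos.le hθlt.le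
        have hRHSeq : (2*(B*α))^θ * (2*B)^(1-θ) = 2*B*α^θ := by
          rw [show 2*(B*α) = (2*B)*α from by ring, Real.mul_rpow (by positivity) hα.le,
            show (2*B)^θ * α^θ * (2*B)^(1-θ) = ((2*B)^θ * (2*B)^(1-θ)) * α^θ from by ring,
            ← Real.rpow_add (by positivity : (0:ℝ) < 2*B),
            show θ + (1-θ) = 1 from by ring, Real.rpow_one]
        have hJ : α * ⟪h0, Tpow (θ+1) h0⟫ + α^2 * ⟪h0, Tpow θ h0⟫ ≤ B * α^θ := by
          have h1 := hinterp
          rw [hRHSeq, hfJapp θ, hFpos θ hθpos] at h1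
          linarith
        -- identify L^2
        have hmoveE : ∀ y : Lp ℝ 2 μX, ⟪h0, y⟫ = ⟪g, T (E (E y))⟫ := by
          intro y
          rw [hh0, hEsym, hpdef, hEsym, hTsym]
        have ht1eq : ⟪h0, Tpow (θ+1) h0⟫ = ⟪g, Tpow (θ+1) (E (E (T (E p))))⟫ := by
          rw [hmoveE (Tpow (θ+1) h0), hh0]
          congr 1
          rw [← hPE (θ+1) (by linarith) (E p), ← hPE (θ+1) (by linarith) (E (E p)),
            ← hPT (θ+1) (by linarith) (E (E (E p)))]
          congr 1
          rw [hETcomm (E p), hETcomm (E (E p))]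
        have ht2eq : ⟪h0, Tpow θ h0⟫ = ⟪g, Tpow (θ+1) (E (E (E p)))⟫ := by
          rw [hmoveE (Tpow θ h0), hh0]
          congr 1
          rw [← hPE θ hθpos (E p), ← hPE θ hθpos (E (E p)), ← hPT θ hθpos (E (E (E p))),
            hPadd θ 1 hθpos one_pos (E (E (E p))), ← hTdef]
        have hsplitv : E (E p) = E (E (T (E p))) + α • E (E (E p)) := by
          conv_lhs => rw [← hE1 p]
          rw [map_add, _root_.map_smul, map_add, _root_.map_smul]
        have hzEEp : E (E (E (T g))) = E (E p) := by rw [hpdef]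
        have hLid : L^2 = ⟪h0, Tpow (θ+1) h0⟫ + α * ⟪h0, Tpow θ h0⟫ := by
          rw [hL2, show ν + ν = θ + 1 from by rw [hθdef]; ring, hzEEp, hsplitv, map_add,
            _root_.map_smul, inner_add_right, real_inner_smul_right, ht1eq, ht2eq]
        -- conclude
        have hfin : α * L^2 ≤ B * α^θ := by
          calc α * L^2 = α * ⟪h0, Tpow (θ+1) h0⟫ + α^2 * ⟪h0, Tpow θ h0⟫ := by
                rw [hLid]; ring
            _ ≤ B * α^θ := hJ
        calc (α*L)^2 = α * (α * L^2) := by ring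
          _ ≤ α * (B * α^θ) := mul_le_mul_of_nonneg_left hfin hα.le
          _ = ‖g‖^2 * α ^ (ν+ν) := by
              rw [hBdef, show ν + ν = θ + 1 from by rw [hθdef]; ring,
                Real.rpow_add hα, Real.rpow_one]
              ring
    have h1 : α*L ≤ ‖g‖ * α ^ ν := by
      apply le_of_sq_le_sq'' (mul_nonneg hα.le hL0)
        (mul_nonneg (norm_nonneg g) (Real.rpow_nonneg hα.le ν))
      calc (α*L)^2 ≤ ‖g‖^2 * α ^ (ν+ν) := hkey
        _ = (‖g‖ * α ^ ν)^2 := by rw [mul_pow, Real.rpow_add hα]; ring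
    rw [hmin]
    have h2 : ‖g‖ * α ^ ν ≤ R * α ^ ν :=
      mul_le_mul_of_nonneg_right hgR (Real.rpow_nonneg hα.le ν)
    have h3 : R * α ^ ν ≤ R * max 1 (κ ^ (2*(ν-1))) * α ^ ν := by
      have := mul_le_mul_of_nonneg_right
        (mul_le_mul_of_nonneg_left (le_max_left (1:ℝ) (κ ^ (2*(ν-1)))) hR.le)
        (Real.rpow_nonneg hα.le ν)
      calc R * α ^ ν = R * 1 * α ^ ν := by ring
        _ ≤ R * max 1 (κ ^ (2*(ν-1))) * α ^ ν := this
    linarith [h1, h2, h3]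
  · -- case 1 ≤ ν
    have hmin : min ν 1 = 1 := min_eq_right hν1
    have hkf0 : 0 ≤ κ ^ (2*(ν-1)) := Real.rpow_nonneg hκ.le _
    have hLb : L ≤ κ ^ (2*(ν-1)) * ‖g‖ := by
      rcases eq_or_lt_of_le hν1 with he | hgt
      · -- 1 = ν
        have hTz : Tpow (ν+ν) (E (E (E (T g)))) = T (T (E (E (E (T g))))) := by
          rw [show ν + ν = 2 from by rw [← he]; norm_num, hT2app]
        have hsq : L^2 ≤ ‖g‖ * ‖g‖ := by
          rw [hL2, hTz]
          calc ⟪g, T (T (E (E (E (T g)))))⟫ ≤ ‖g‖ * ‖T (T (E (E (E (T g)))))‖ :=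
              real_inner_le_norm _ _
            _ ≤ ‖g‖ * ‖g‖ := mul_le_mul_of_nonneg_left hTTz (norm_nonneg g)
        have hL1 : L ≤ ‖g‖ := le_of_sq_le_sq'' hL0 (norm_nonneg g) (by nlinarith)
        have hkf1 : κ ^ (2*(ν-1)) = 1 := by
          rw [show 2*(ν-1) = 0 from by rw [← he]; ring, Real.rpow_zero]
        rw [hkf1, one_mul]
        exact hL1
      · -- 1 < ν
        have hθ2 : (0:ℝ) < ν + ν - 2 := by linarith
        have hTz : Tpow (ν+ν) (E (E (E (T g)))) = Tpow (ν+ν-2) (T (T (E (E (E (T g)))))) := by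
          have h := hPadd (ν+ν-2) 2 hθ2 (by norm_num) (E (E (E (T g))))
          rw [show (ν+ν-2) + 2 = ν + ν from by ring, hT2app] at h
          exact h
        have hnorm2 : ‖Tpow (ν+ν-2) (T (T (E (E (E (T g))))))‖ ≤ (κ^2) ^ (ν+ν-2) * ‖g‖ := by
          calc ‖Tpow (ν+ν-2) (T (T (E (E (E (T g))))))‖
              ≤ ‖Tpow (ν+ν-2)‖ * ‖T (T (E (E (E (T g)))))‖ := ContinuousLinearMap.le_opNorm _ _
            _ ≤ (κ^2) ^ (ν+ν-2) * ‖g‖ :=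
              mul_le_mul (hTnorm _ hθ2) hTTz (norm_nonneg _) (Real.rpow_nonneg (by positivity) _)
        have hLsq : L^2 ≤ ‖g‖ * ((κ^2) ^ (ν+ν-2) * ‖g‖) := by
          rw [hL2, hTz]
          calc ⟪g, Tpow (ν+ν-2) (T (T (E (E (E (T g))))))⟫
              ≤ ‖g‖ * ‖Tpow (ν+ν-2) (T (T (E (E (E (T g))))))‖ := real_inner_le_norm _ _
            _ ≤ ‖g‖ * ((κ^2) ^ (ν+ν-2) * ‖g‖) := mul_le_mul_of_nonneg_left hnorm2 (norm_nonneg g)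
        have hkf : ((κ^2:ℝ)) ^ (ν+ν-2) = (κ ^ (2*(ν-1)))^2 := by
          rw [← Real.rpow_natCast κ 2, ← Real.rpow_natCast (κ ^ (2*(ν-1))) 2,
            ← Real.rpow_mul hκ.le, ← Real.rpow_mul hκ.le]
          congr 1
          push_cast
          ring
        apply le_of_sq_le_sq'' hL0 (mul_nonneg hkf0 (norm_nonneg g))
        rw [mul_pow]
        nlinarith [hLsq, hkf]
    rw [hmin, Real.rpow_one]
    have h3 : α * (κ ^ (2*(ν-1)) * ‖g‖) ≤ α * (κ ^ (2*(ν-1)) * R) :=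
      mul_le_mul_of_nonneg_left (mul_le_mul_of_nonneg_left hgR hkf0) hα.le
    have h4 : α * (κ ^ (2*(ν-1)) * R) ≤ α * (max 1 (κ ^ (2*(ν-1))) * R) :=
      mul_le_mul_of_nonneg_left (mul_le_mul_of_nonneg_right (le_max_right _ _) hR.le) hα.le
    calc α * L ≤ α * (κ ^ (2*(ν-1)) * ‖g‖) := mul_le_mul_of_nonneg_left hLb hα.le
      _ ≤ α * (κ ^ (2*(ν-1)) * R) := h3
      _ ≤ α * (max 1 (κ ^ (2*(ν-1))) * R) := h4
      _ = R * max 1 (κ ^ (2*(ν-1))) * α := by ring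
end
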